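/- Let A be a well-formed choreography automaton, let p ≠ q be two of its participants, and let A_p and A_q be the intermediate CFSMs of A for p and q. If, for a state s of A, A_p has a run s →ε⋆ s_p →(pq!m) s'_p and A_q has a run s →ε⋆ s_q →(pq?m) s'_q, then the state s has in A an outgoing transition labelled p→q:m. -/

import Mathlib

namespace CAut

/-! ## Basic alphabets: interactions and communication actions -/

/-- An interaction `p→q:m`: participant `p` sends message `m` to `q` (`p ≠ q`). -/
structure Interaction (P M : Type) where
  sender : P
  receiver : P
  ne : sender ≠ receiver
  msg : M

/-- Communication actions: `send p q m` is the output `pq!m` (subject `p`),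
`recv p q m` is the input `pq?m` (subject `q`). -/
inductive Act (P M : Type) : Type where
  | send (p q : P) (m : M)
  | recv (p q : P) (m : M)

/-! ## Labelled transition systems -/

/-- A labelled transition system over labels `L`; the label `none` is the silent label ε.
An FSA is an LTS with finitely many states (expressed with `[Finite Q]` hypotheses). -/
structure LTS (Q L : Type) where
  init : Q
  Trans : Q → Option L → Q → Prop

/-- Runs from a state `q`: lists of consecutive transitions `(source, label, target)`. -/
inductive Steps {Q L : Type} (A : LTS Q L) : Q → List (Q × Option L × Q) → Q → Prop where
  | nil (q : Q) : Steps A q [] q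
  | cons {q q' q'' : Q} {ℓ : Option L} {π : List (Q × Option L × Q)} :
      A.Trans q ℓ q' → Steps A q' π q'' → Steps A q ((q, ℓ, q') :: π) q''

/-- The trace of a run: the concatenation of its non-ε labels. -/
def traceOf {Q L : Type} (π : List (Q × Option L × Q)) : List L :=
  π.filterMap fun t => t.2.1

/-- The language of an LTS: set of traces of its runs (from the initial state). -/
def lang {Q L : Type} (A : LTS Q L) : Set (List L) :=
  {w | ∃ π e, Steps A A.init π e ∧ traceOf π = w}

/-- A state is reachable if some run from the initial state ends in it. -/
def Reachable {Q L : Type} (A : LTS Q L) (q : Q) : Prop :=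
  ∃ π, Steps A A.init π q

/-! ## Participants -/

def ptpI {P M : Type} (α : Interaction P M) : Set P := {α.sender, α.receiver}

/-- Interactions are independent when they share no participant. -/
def Indep {P M : Type} (α β : Interaction P M) : Prop := ptpI α ∩ ptpI β = ∅

def ptpStep {Q P M : Type} (t : Q × Option (Interaction P M) × Q) : Set P :=
  {p | ∃ α, t.2.1 = some α ∧ p ∈ ptpI α}

def ptpRun {Q P M : Type} (π : List (Q × Option (Interaction P M) × Q)) : Set P :=
  {p | ∃ t ∈ π, p ∈ ptpStep t}

/-- The (finite) set of participants occurring in a c-automaton. -/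
def ptps {Q P M : Type} (A : LTS Q (Interaction P M)) : Set P :=
  {p | ∃ q α q', A.Trans q (some α) q' ∧ p ∈ ptpI α}

/-! ## Projection -/

/-- Projection of an interaction on a participant. -/
def projLabel {P M : Type} [DecidableEq P] (p : P) (α : Interaction P M) : Option (Act P M) :=
  if α.sender = p then some (Act.send p α.receiver α.msg)
  else if α.receiver = p then some (Act.recv α.sender p α.msg)
  else none

/-- Homomorphic extension of the projection to words of interactions. -/
def projWord {P M : Type} [DecidableEq P] (p : P) (w : List (Interaction P M)) :
    List (Act P M) :=
  w.filterMap (projLabel p)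

/-- The intermediate CFSM `A_p`: each transition label is replaced by its projection. -/
def intermediate {Q P M : Type} [DecidableEq P] (A : LTS Q (Interaction P M)) (p : P) :
    LTS Q (Act P M) where
  init := A.init
  Trans := fun q ℓ q' => ∃ αo : Option (Interaction P M),
    A.Trans q αo q' ∧ ℓ = αo.bind (projLabel p)

/-- ε-steps of an LTS. -/
def EpsStep {Q L : Type} (A : LTS Q L) (q q' : Q) : Prop := A.Trans q none q'

def epsClosure {Q L : Type} (A : LTS Q L) (S : Set Q) : Set Q :=
  {q' | ∃ q ∈ S, Relation.ReflTransGen (EpsStep A) q q'}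

/-- Determinisation (subset construction); minimisation up to language equivalence is
immaterial for the properties considered here. -/
def determinize {Q L : Type} (A : LTS Q L) : LTS (Set Q) L where
  init := epsClosure A {A.init}
  Trans := fun S ℓo S' => ∃ ℓ, ℓo = some ℓ ∧
    S' = epsClosure A {q' | ∃ q ∈ S, A.Trans q (some ℓ) q'} ∧ S'.Nonempty

/-- The projection `A↓p` of a c-automaton on a participant. -/
def projCA {Q P M : Type} [DecidableEq P] (A : LTS Q (Interaction P M)) (p : P) :
    LTS (Set Q) (Act P M) :=
  determinize (intermediate A p)

/-! ## Synchronous semantics of communicating systems -/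

/-- Synchronous semantics of the communicating system `Ms` (one p-local CFSM for each
participant): configurations map each participant to a local state. -/
def sem {P S M : Type} (Ms : P → LTS S (Act P M)) : LTS (P → S) (Interaction P M) where
  init := fun p => (Ms p).init
  Trans := fun s1 ℓo s2 =>
    (∃ α : Interaction P M, ℓo = some α ∧
      (Ms α.sender).Trans (s1 α.sender) (some (Act.send α.sender α.receiver α.msg))
        (s2 α.sender) ∧
      (Ms α.receiver).Trans (s1 α.receiver) (some (Act.recv α.sender α.receiver α.msg))
        (s2 α.receiver) ∧
      ∀ x, x ∉ ptpI α → s1 x = s2 x)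
    ∨ (ℓo = none ∧ ∃ p, (Ms p).Trans (s1 p) none (s2 p) ∧ ∀ x, x ≠ p → s1 x = s2 x)

/-- `⟦A↓⟧`: the synchronous semantics of the projection of `A`. -/
def semProj {Q P M : Type} [DecidableEq P] (A : LTS Q (Interaction P M)) :
    LTS (P → Set Q) (Interaction P M) :=
  sem (fun p => projCA A p)

/-! ## Bisimulations -/

def sumTrans {QA QB L : Type} (A : LTS QA L) (B : LTS QB L) :
    (QA ⊕ QB) → Option L → (QA ⊕ QB) → Prop
  | Sum.inl q, ℓ, Sum.inl q' => A.Trans q ℓ q'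
  | Sum.inr q, ℓ, Sum.inr q' => B.Trans q ℓ q'
  | _, _, _ => False

/-- A (strong) bisimulation between `A` and `B`. -/
def IsBisimulation {QA QB L : Type} (A : LTS QA L) (B : LTS QB L)
    (R : (QA ⊕ QB) → (QA ⊕ QB) → Prop) : Prop :=
  Symmetric R ∧ R (Sum.inl A.init) (Sum.inr B.init) ∧
  ∀ x y, R x y → ∀ ℓ x', sumTrans A B x ℓ x' →
    ∃ y', sumTrans A B y ℓ y' ∧ R x' y'

def Bisimilar {QA QB L : Type} (A : LTS QA L) (B : LTS QB L) : Prop :=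
  ∃ R, IsBisimulation A B R

/-! ## Well-sequencedness -/

/-- Well-sequencedness of a c-automaton. -/
def WellSequenced {Q P M : Type} (A : LTS Q (Interaction P M)) : Prop :=
  ∀ q q' q'' (α β : Interaction P M),
    A.Trans q (some α) q' → A.Trans q' (some β) q'' →
    (ptpI α ∩ ptpI β).Nonempty ∨
    ∃ q''', A.Trans q (some β) q''' ∧ A.Trans q''' (some α) q'' ∧
      ∀ γ q'''', A.Trans q''' (some γ) q'''' → Indep γ α ∧ Indep γ β

/-! ## Full awareness -/

/-- The partner of `p` in an interaction. -/
def partner {P M : Type} [DecidableEq P] (p : P) (α : Interaction P M) : P :=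
  if α.sender = p then α.receiver else α.sender

/-- Full awareness of a participant of a pair of coinitial runs. -/
inductive FullyAware {Q P M : Type} [DecidableEq P] :
    P → List (Q × Option (Interaction P M) × Q) → List (Q × Option (Interaction P M) × Q) →
    Prop where
  | first {p : P} {π1 π2 : List (Q × Option (Interaction P M) × Q)}
      {α1 α2 : Interaction P M} :
      p ∈ ptpRun π1 → p ∈ ptpRun π2 →
      α1 ≠ α2 → p ∈ ptpI α1 → p ∈ ptpI α2 →
      (traceOf π1).head? = some α1 →
      (traceOf π2).head? = some α2 →
      FullyAware p π1 π2
  | later {p : P} {π1 π2 π₁ π₂ : List (Q × Option (Interaction P M) × Q)}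
      {α1 α2 : Interaction P M} :
      p ∈ ptpRun π1 → p ∈ ptpRun π2 →
      α1 ≠ α2 → p ∈ ptpI α1 → p ∈ ptpI α2 →
      π₁ <+: π1 → π₁ ≠ π1 →
      π₂ <+: π2 → π₂ ≠ π2 →
      projWord p (traceOf π₁) = projWord p (traceOf π₂) →
      FullyAware (partner p α1) π₁ π₂ →
      FullyAware (partner p α2) π₁ π₂ →
      traceOf π₁ ++ [α1] <+: traceOf π1 →
      traceOf π₂ ++ [α2] <+: traceOf π2 →
      α1 ∉ traceOf π2 → α2 ∉ traceOf π1 →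
      FullyAware p π1 π2

/-! ## Branches and spans -/

/-- A nonempty chain of transitions whose first source equals its last target. -/
def IsCycle {Q L : Type} (c : List (Q × Option L × Q)) : Prop :=
  c ≠ [] ∧ (c.head?.map fun t => t.1) = (c.getLast?.map fun t => t.2.2)

/-- Pre-candidate `q`-branch: a run from `q` in which each cycle occurs at most once. -/
def PreCandidate {Q L : Type} (A : LTS Q L) (q : Q) (π : List (Q × Option L × Q)) : Prop :=
  (∃ e, Steps A q π e) ∧
  ∀ c a b a' b', IsCycle c → π = a ++ c ++ b → π = a' ++ c ++ b' → a = a'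

/-- Candidate `q`-branch: a maximal pre-candidate `q`-branch in the prefix order. -/
def Candidate {Q L : Type} (A : LTS Q L) (q : Q) (π : List (Q × Option L × Q)) : Prop :=
  PreCandidate A q π ∧ ∀ π', PreCandidate A q π' → π <+: π' → π' = π

/-- The states visited by a run starting at `q`. -/
def visited {Q L : Type} (q : Q) (π : List (Q × Option L × Q)) : Set Q :=
  insert q {s | ∃ t ∈ π, t.2.2 = s}

/-- `q`-spans. -/
def Span {Q L : Type} (A : LTS Q L) (q : Q) (π1 π2 : List (Q × Option L × Q)) : Prop :=
  PreCandidate A q π1 ∧ PreCandidate A q π2 ∧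
  ((∃ e, Steps A q π1 e ∧ Steps A q π2 e ∧
      ∀ s, s ∈ visited q π1 → s ∈ visited q π2 → s = q ∨ s = e) ∨
   (Candidate A q π1 ∧ Candidate A q π2 ∧
      ∀ s, s ∈ visited q π1 → s ∈ visited q π2 → s = q) ∨
   ((Candidate A q π1 ∧ π2 ≠ [] ∧ Steps A q π2 q ∧
       ∀ s, s ∈ visited q π1 → s ∈ visited q π2 → s = q) ∨
    (Candidate A q π2 ∧ π1 ≠ [] ∧ Steps A q π1 q ∧
       ∀ s, s ∈ visited q π1 → s ∈ visited q π2 → s = q)))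

/-! ## Well-branchedness -/

/-- Determinism: no ε-transitions and no two distinct equally-labelled outgoing transitions. -/
def Deterministic {Q L : Type} (A : LTS Q L) : Prop :=
  (∀ q q', ¬ A.Trans q none q') ∧
  ∀ q ℓ q1 q2, A.Trans q (some ℓ) q1 → A.Trans q (some ℓ) q2 → q1 = q2

/-- The outgoing transitions of a state, as (label, target) pairs. -/
def outT {Q P M : Type} (A : LTS Q (Interaction P M)) (q : Q) :
    Set (Interaction P M × Q) :=
  {t | A.Trans q (some t.1) t.2}

def ptpTs {Q P M : Type} (T : Set (Interaction P M × Q)) : Set P :=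
  {p | ∃ t ∈ T, p ∈ ptpI t.1}

/-- A run starts with a transition from the given set. -/
def startsIn {Q P M : Type} (q : Q) (Ti : Set (Interaction P M × Q))
    (π : List (Q × Option (Interaction P M) × Q)) : Prop :=
  ∃ α q' rest, π = (q, some α, q') :: rest ∧ (α, q') ∈ Ti

/-- The first transition of `π` involving `p` (if any) is with a participant fully aware
of `(π1, π2)`. -/
def FirstWithAware {Q P M : Type} [DecidableEq P] (p : P)
    (π π1 π2 : List (Q × Option (Interaction P M) × Q)) : Prop :=
  ∀ pre t post, π = pre ++ t :: post → p ∈ ptpStep t → p ∉ ptpRun pre →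
    ∃ p', p' ∈ ptpStep t ∧ p' ≠ p ∧ FullyAware p' π1 π2

/-- Well-branchedness of a c-automaton. -/
def WellBranched {Q P M : Type} [DecidableEq P] (A : LTS Q (Interaction P M)) : Prop :=
  Deterministic A ∧
  ∀ q : Q, ∃ T : Set (Set (Interaction P M × Q)),
    (∀ Ti ∈ T, Ti.Nonempty ∧ Ti ⊆ outT A q) ∧
    (∀ t ∈ outT A q, ∃ Ti ∈ T, t ∈ Ti) ∧
    (∀ Ti ∈ T, ∀ Tj ∈ T, Ti ≠ Tj → Ti ∩ Tj = ∅) ∧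
    (∀ Ti ∈ T, ∀ Tj ∈ T, Ti ≠ Tj →
      ptpTs Ti ∩ ptpTs Tj = ∅ ∧
      ∀ αi qi αj qj, (αi, qi) ∈ Ti → (αj, qj) ∈ Tj →
        ∃ q', A.Trans qi (some αj) q' ∧ A.Trans qj (some αi) q') ∧
    (∀ Ti ∈ T,
      (⋂ t ∈ Ti, ptpI t.1).Nonempty ∧
      ∀ p ∈ ptps A, p ∉ (⋂ t ∈ Ti, ptpI t.1) →
        ∀ π1 π2, Span A q π1 π2 → startsIn q Ti π1 → startsIn q Ti π2 →
          projWord p (traceOf π1) ≠ projWord p (traceOf π2) →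
          FullyAware p π1 π2 ∨
          ((p ∉ ptpRun π1 ∧ FirstWithAware p π2 π1 π2 ∧
             ∀ π', Candidate A q (π1 ++ π') → FirstWithAware p π' π1 π2) ∨
           (p ∉ ptpRun π2 ∧ FirstWithAware p π1 π1 π2 ∧
             ∀ π', Candidate A q (π2 ++ π') → FirstWithAware p π' π1 π2)))

/-- Well-formed c-automaton: well-sequenced and well-branched. -/
def WellFormed {Q P M : Type} [DecidableEq P] (A : LTS Q (Interaction P M)) : Prop :=
  WellSequenced A ∧ WellBranched A

/-! ## Deadlock and lock freedom of projections -/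

/-- A state of `A↓p` (a set of states of `A`, by determinisation) is final if it contains
some `q` with a candidate `q`-branch not involving `p`. -/
def FinalState {Q P M : Type} (A : LTS Q (Interaction P M)) (p : P) (S : Set Q) : Prop :=
  ∃ q ∈ S, ∃ π, Candidate A q π ∧ p ∉ ptpRun π

/-- Deadlock freedom of the projection of a c-automaton. -/
def DeadlockFreeProj {Q P M : Type} [DecidableEq P] (A : LTS Q (Interaction P M)) : Prop :=
  ∀ s : P → Set Q, Reachable (semProj A) s →
    (∃ ℓ s', (semProj A).Trans s ℓ s') ∨ ∀ p ∈ ptps A, FinalState A p (s p)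

/-- Lock freedom of the projection of a c-automaton. -/
def LockFreeProj {Q P M : Type} [DecidableEq P] (A : LTS Q (Interaction P M)) : Prop :=
  ∀ s : P → Set Q, Reachable (semProj A) s → ∀ p ∈ ptps A,
    FinalState A p (s p) ∨
    ((∃ ℓ s', (semProj A).Trans s ℓ s') ∧
     ∀ π, Candidate (semProj A) s π → p ∈ ptpRun π)



/-! ## Auxiliary machinery for Statement 5 -/

section Aux

open List

variable {P M Q L : Type}

theorem Interaction.ext' {a b : Interaction P M} (h1 : a.sender = b.sender)
    (h2 : a.receiver = b.receiver) (h3 : a.msg = b.msg) : a = b := by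
  cases a; cases b; simp_all

lemma mem_ptpI_iff {x : P} {a : Interaction P M} :
    x ∈ ptpI a ↔ x = a.sender ∨ x = a.receiver := by
  simp [ptpI]

lemma sender_mem_ptpI (a : Interaction P M) : a.sender ∈ ptpI a := by simp [ptpI]

lemma receiver_mem_ptpI (a : Interaction P M) : a.receiver ∈ ptpI a := by simp [ptpI]

/-- Well-sequencedness collapses: consecutive interactions share a participant. -/
lemma ws_share {A : LTS Q (Interaction P M)} (hws : WellSequenced A)
    {x y z : Q} {a b : Interaction P M} (h1 : A.Trans x (some a) y)
    (h2 : A.Trans y (some b) z) : (ptpI a ∩ ptpI b).Nonempty := by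
  rcases hws x y z a b h1 h2 with h | ⟨w, hb, ha, hall⟩
  · exact h
  · exfalso
    have hind := (hall a z ha).1
    have : a.sender ∈ (∅ : Set P) := by
      rw [← hind]; exact ⟨sender_mem_ptpI a, sender_mem_ptpI a⟩
    exact this

end Aux


section RunLemmas

open List

variable {P M Q L : Type} {A : LTS Q L}

lemma Steps.append_steps {a b c : Q} {r r' : List (Q × Option L × Q)}
    (h : Steps A a r b) (h' : Steps A b r' c) : Steps A a (r ++ r') c := by
  induction h with
  | nil => exact h'
  | cons ht _ ih => exact Steps.cons ht (ih h')

lemma Steps.end_unique {a b c : Q} {r : List (Q × Option L × Q)}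
    (h : Steps A a r b) (h' : Steps A a r c) : b = c := by
  induction h with
  | nil => cases h'; rfl
  | cons ht hs ih => cases h' with | cons ht' hs' => exact ih hs'

/-- the state after `k` steps of a run starting at `s` -/
def stAt (s : Q) (r : List (Q × Option L × Q)) (k : ℕ) : Q :=
  match (r.take k).getLast? with
  | none => s
  | some t => t.2.2

@[simp] lemma stAt_zero (s : Q) (r : List (Q × Option L × Q)) : stAt s r 0 = s := rfl

@[simp] lemma stAt_nil (s : Q) (k : ℕ) : stAt s ([] : List (Q × Option L × Q)) k = s := by
  cases k <;> rfl

lemma stAt_cons_succ (s : Q) (t : Q × Option L × Q) (r : List (Q × Option L × Q)) (k : ℕ) :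
    stAt s (t :: r) (k + 1) = stAt t.2.2 r k := by
  unfold stAt
  rw [List.take_succ_cons]
  cases h : r.take k with
  | nil => simp [h]
  | cons x xs =>
    rw [List.getLast?_cons_cons]
    rw [List.getLast?_eq_getLast_of_ne_nil (l := x :: xs) (by simp)]

lemma steps_take {s e : Q} {r : List (Q × Option L × Q)}
    (h : Steps A s r e) (k : ℕ) : Steps A s (r.take k) (stAt s r k) := by
  induction r generalizing s k with
  | nil => simpa using Steps.nil s
  | cons t r ih =>
    cases h with
    | cons ht hs =>
      cases k with
      | zero => exact Steps.nil s
      | succ k =>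
        rw [List.take_succ_cons, stAt_cons_succ]
        exact Steps.cons ht (ih hs k)

lemma steps_drop {s e : Q} {r : List (Q × Option L × Q)}
    (h : Steps A s r e) (k : ℕ) : Steps A (stAt s r k) (r.drop k) e := by
  induction r generalizing s k with
  | nil => simpa using h
  | cons t r ih =>
    cases h with
    | cons ht hs =>
      cases k with
      | zero => exact Steps.cons ht hs
      | succ k =>
        rw [List.drop_succ_cons, stAt_cons_succ]
        exact ih hs k

lemma stAt_length {s e : Q} {r : List (Q × Option L × Q)}
    (h : Steps A s r e) : stAt s r r.length = e := by
  have h1 := steps_drop h r.length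
  rw [List.drop_length] at h1
  cases h1; rfl

lemma stAt_of_length_le {s e : Q} {r : List (Q × Option L × Q)}
    (h : Steps A s r e) {k : ℕ} (hk : r.length ≤ k) : stAt s r k = e := by
  have : stAt s r k = stAt s r r.length := by
    unfold stAt
    rw [List.take_of_length_le hk, List.take_length]
  rw [this, stAt_length h]

lemma stAt_prefix {s : Q} {r r' : List (Q × Option L × Q)} (hp : r <+: r')
    {k : ℕ} (hk : k ≤ r.length) : stAt s r k = stAt s r' k := by
  obtain ⟨z, rfl⟩ := hp
  unfold stAt
  rw [List.take_append, Nat.sub_eq_zero_of_le hk, List.take_zero,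
    List.append_nil]

lemma run_get {s e : Q} {r : List (Q × Option L × Q)} (h : Steps A s r e) :
    ∀ (i : ℕ) (hi : i < r.length),
      (r[i]'hi).1 = stAt s r i ∧ (r[i]'hi).2.2 = stAt s r (i + 1) := by
  induction r generalizing s with
  | nil => intro i hi; simp at hi
  | cons t r ih =>
    cases h with
    | cons ht hs =>
      intro i hi
      cases i with
      | zero =>
        refine ⟨rfl, ?_⟩
        rw [stAt_cons_succ]
        rfl
      | succ i =>
        have := ih hs i (by simpa using hi)
        simpa [stAt_cons_succ] using this

lemma mem_run_trans {s e : Q} {r : List (Q × Option L × Q)} (h : Steps A s r e)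
    {t : Q × Option L × Q} (ht : t ∈ r) : A.Trans t.1 t.2.1 t.2.2 := by
  induction h with
  | nil => simp at ht
  | cons htr hs ih =>
    rcases List.mem_cons.1 ht with rfl | ht'
    · exact htr
    · exact ih ht'

lemma mem_visited_iff {s e : Q} {r : List (Q × Option L × Q)} (h : Steps A s r e) {y : Q} :
    y ∈ visited s r ↔ ∃ k, k ≤ r.length ∧ stAt s r k = y := by
  constructor
  · intro hy
    rcases hy with rfl | ⟨t, ht, hty⟩
    · exact ⟨0, Nat.zero_le _, rfl⟩
    · obtain ⟨i, hi, rfl⟩ := List.mem_iff_getElem.1 ht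
      exact ⟨i + 1, hi, by rw [← (run_get h i hi).2]; exact hty⟩
  · rintro ⟨k, hk, rfl⟩
    cases k with
    | zero => exact Or.inl rfl
    | succ k =>
      right
      have hk' : k < r.length := hk
      refine ⟨r[k]'hk', List.getElem_mem _, (run_get h k hk').2⟩

lemma visited_prefix_subset {s : Q} {r r' : List (Q × Option L × Q)} (hp : r <+: r') :
    visited s r ⊆ visited s r' := by
  intro y hy
  rcases hy with rfl | ⟨t, ht, hty⟩
  · exact Or.inl rfl
  · exact Or.inr ⟨t, hp.subset ht, hty⟩

lemma stAt_mem_visited {s e : Q} {r : List (Q × Option L × Q)} (h : Steps A s r e)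
    {k : ℕ} (hk : k ≤ r.length) : stAt s r k ∈ visited s r :=
  (mem_visited_iff h).2 ⟨k, hk, rfl⟩

end RunLemmas


section TraceLemmas

open List

variable {P M Q L : Type} [DecidableEq P]

lemma traceOf_append (r r' : List (Q × Option L × Q)) :
    traceOf (r ++ r') = traceOf r ++ traceOf r' := List.filterMap_append

lemma traceOf_cons (t : Q × Option L × Q) (r : List (Q × Option L × Q)) :
    traceOf (t :: r) = match t.2.1 with
      | none => traceOf r
      | some b => b :: traceOf r := by
  cases t with
  | mk u x =>
    cases x with
    | mk o v => cases o <;> simp [traceOf]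

lemma mem_traceOf_iff {b : L} {r : List (Q × Option L × Q)} :
    b ∈ traceOf r ↔ ∃ t ∈ r, t.2.1 = some b := by
  simp [traceOf, List.mem_filterMap]

lemma traceOf_prefix {r r' : List (Q × Option L × Q)} (h : r <+: r') :
    traceOf r <+: traceOf r' := by
  obtain ⟨z, rfl⟩ := h
  rw [traceOf_append]
  exact List.prefix_append _ _

lemma projWord_append (x : P) (w w' : List (Interaction P M)) :
    projWord x (w ++ w') = projWord x w ++ projWord x w' := List.filterMap_append

lemma projWord_prefix (x : P) {w w' : List (Interaction P M)} (h : w <+: w') :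
    projWord x w <+: projWord x w' := by
  obtain ⟨z, rfl⟩ := h
  rw [projWord_append]
  exact List.prefix_append _ _

lemma mem_projWord_iff {x : P} {a : Act P M} {w : List (Interaction P M)} :
    a ∈ projWord x w ↔ ∃ b ∈ w, projLabel x b = some a := by
  simp [projWord, List.mem_filterMap]

lemma projLabel_eq_none_iff {x : P} {b : Interaction P M} :
    projLabel x b = none ↔ x ∉ ptpI b := by
  unfold projLabel
  by_cases h1 : b.sender = x
  · simp only [h1, if_pos rfl, mem_ptpI_iff]
    constructor
    · intro h; cases h
    · intro h; exact absurd (Or.inl trivial) h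
  · by_cases h2 : b.receiver = x
    · simp only [if_neg h1, h2, if_pos rfl, mem_ptpI_iff]
      constructor
      · intro h; cases h
      · intro h; exact absurd (Or.inr trivial) h
    · simp only [if_neg h1, if_neg h2, mem_ptpI_iff, true_iff]
      rintro (h | h)
      · exact h1 h.symm
      · exact h2 h.symm

lemma projLabel_isSome_of_mem {x : P} {b : Interaction P M} (h : x ∈ ptpI b) :
    ∃ a, projLabel x b = some a := by
  cases ho : projLabel x b with
  | none => exact absurd (projLabel_eq_none_iff.1 ho) (not_not.2 h)
  | some a => exact ⟨a, rfl⟩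

variable {p q : P} {hpq : p ≠ q} {m : M}

lemma projLabel_send_iff {b : Interaction P M} :
    projLabel p b = some (Act.send p q m) ↔ b = ⟨p, q, hpq, m⟩ := by
  unfold projLabel
  by_cases h1 : b.sender = p
  · simp only [h1, if_pos rfl, Option.some_inj]
    constructor
    · intro h
      cases h
      exact Interaction.ext' h1 rfl rfl
    · rintro rfl; rfl
  · by_cases h2 : b.receiver = p
    · simp only [h1, if_neg h1, h2, if_pos rfl]
      constructor
      · intro h; cases h
      · rintro rfl; exact absurd rfl h1
    · simp only [h1, if_neg h1, h2, if_neg h2]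
      constructor
      · intro h; cases h
      · rintro rfl; exact absurd rfl h1

lemma projLabel_recv_iff {b : Interaction P M} :
    projLabel q b = some (Act.recv p q m) ↔ b = ⟨p, q, hpq, m⟩ := by
  unfold projLabel
  by_cases h1 : b.sender = q
  · simp only [h1, if_pos rfl]
    constructor
    · intro h; cases h
    · rintro rfl; exact absurd h1 hpq
  · by_cases h2 : b.receiver = q
    · simp only [h1, if_neg h1, h2, if_pos rfl, Option.some_inj]
      constructor
      · intro h
        cases h
        exact Interaction.ext' rfl h2 rfl
      · rintro rfl; rfl
    · simp only [h1, if_neg h1, h2, if_neg h2]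
      constructor
      · intro h; cases h
      · rintro rfl; exact absurd rfl h2

lemma send_mem_projWord_iff {w : List (Interaction P M)} :
    Act.send p q m ∈ projWord p w ↔ (⟨p, q, hpq, m⟩ : Interaction P M) ∈ w := by
  rw [mem_projWord_iff]
  constructor
  · rintro ⟨b, hb, hb2⟩
    rwa [(projLabel_send_iff (hpq := hpq)).1 hb2] at hb
  · intro h
    exact ⟨_, h, (projLabel_send_iff (hpq := hpq)).2 rfl⟩

lemma recv_mem_projWord_iff {w : List (Interaction P M)} :
    Act.recv p q m ∈ projWord q w ↔ (⟨p, q, hpq, m⟩ : Interaction P M) ∈ w := by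
  rw [mem_projWord_iff]
  constructor
  · rintro ⟨b, hb, hb2⟩
    rwa [(projLabel_recv_iff (hpq := hpq)).1 hb2] at hb
  · intro h
    exact ⟨_, h, (projLabel_recv_iff (hpq := hpq)).2 rfl⟩

/-- A run whose labels are all `some` interactions not involving `x`. -/
def Avoids (x : P) (r : List (Q × Option (Interaction P M) × Q)) : Prop :=
  ∀ t ∈ r, ∃ b, t.2.1 = some b ∧ x ∉ ptpI b

lemma Avoids.sublist {x : P} {r r' : List (Q × Option (Interaction P M) × Q)}
    (h : Avoids x r') (hs : r <+ r') : Avoids x r :=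
  fun t ht => h t (hs.subset ht)

lemma Avoids.of_prefix {x : P} {r r' : List (Q × Option (Interaction P M) × Q)}
    (h : Avoids x r') (hs : r <+: r') : Avoids x r :=
  h.sublist hs.sublist

lemma Avoids.not_ptpRun {x : P} {r : List (Q × Option (Interaction P M) × Q)}
    (h : Avoids x r) : x ∉ ptpRun r := by
  rintro ⟨t, ht, b, hb, hxb⟩
  obtain ⟨b', hb', hxb'⟩ := h t ht
  rw [hb'] at hb
  cases hb
  exact hxb' hxb

lemma Avoids.projWord_nil {x : P} {r : List (Q × Option (Interaction P M) × Q)}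
    (h : Avoids x r) : projWord x (traceOf r) = [] := by
  apply List.filterMap_eq_nil_iff.2
  intro b hb
  obtain ⟨t, ht, htb⟩ := mem_traceOf_iff.1 hb
  obtain ⟨b', hb', hxb'⟩ := h t ht
  rw [hb'] at htb
  cases htb
  exact projLabel_eq_none_iff.2 hxb'

lemma Avoids.not_mem_trace {x : P} {r : List (Q × Option (Interaction P M) × Q)}
    (h : Avoids x r) {b : Interaction P M} (hxb : x ∈ ptpI b) : b ∉ traceOf r := by
  intro hb
  obtain ⟨t, ht, htb⟩ := mem_traceOf_iff.1 hb
  obtain ⟨b', hb', hxb'⟩ := h t ht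
  rw [hb'] at htb
  cases htb
  exact hxb' hxb

lemma Avoids.traceOf_length {x : P} {r : List (Q × Option (Interaction P M) × Q)}
    (h : Avoids x r) : (traceOf r).length = r.length := by
  induction r with
  | nil => rfl
  | cons t r ih =>
    obtain ⟨b, hb, -⟩ := h t (List.mem_cons_self)
    rw [traceOf_cons, hb]
    simp only [List.length_cons]
    rw [ih (fun u hu => h u (List.mem_cons_of_mem _ hu))]

lemma FullyAware.mem_left {x : P} {r1 r2 : List (Q × Option (Interaction P M) × Q)}
    (h : FullyAware x r1 r2) : x ∈ ptpRun r1 := by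
  cases h with
  | first h1 _ _ _ _ _ _ => exact h1
  | later h1 _ _ _ _ _ _ _ _ _ _ _ _ _ _ _ => exact h1

lemma FullyAware.mem_right {x : P} {r1 r2 : List (Q × Option (Interaction P M) × Q)}
    (h : FullyAware x r1 r2) : x ∈ ptpRun r2 := by
  cases h with
  | first _ h2 _ _ _ _ _ => exact h2
  | later _ h2 _ _ _ _ _ _ _ _ _ _ _ _ _ _ => exact h2

lemma ptpRun_mono {x : P} {r r' : List (Q × Option (Interaction P M) × Q)}
    (hs : r <+ r') (h : x ∈ ptpRun r) : x ∈ ptpRun r' := by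
  obtain ⟨t, ht, hx⟩ := h
  exact ⟨t, hs.subset ht, hx⟩

lemma mem_ptpStep_iff {x : P} {u u' : Q} {b : Interaction P M} :
    x ∈ ptpStep (u, some b, u') ↔ x ∈ ptpI b := by
  constructor
  · rintro ⟨c, hc, hx⟩
    cases hc
    exact hx
  · intro hx
    exact ⟨b, rfl, hx⟩

end TraceLemmas


section CandLemmas

open List

variable {P M Q L : Type}

lemma nodup_eq_prefix {γ : Type} {x : γ} :
    ∀ {a : List γ} {l b u v : List γ},
      l.Nodup → l = a ++ x :: u → l = b ++ x :: v → a = b := by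
  intro a
  induction a with
  | nil =>
    intro l b u v hnd h1 h2
    subst h1
    cases b with
    | nil => rfl
    | cons y b' =>
      simp only [List.nil_append, List.cons_append] at h2
      obtain ⟨hxy, h2'⟩ := List.cons_eq_cons.1 h2
      exfalso
      have hx : x ∈ u := by rw [h2']; exact List.mem_append_right _ (List.mem_cons_self)
      exact (List.nodup_cons.1 hnd).1 hx
  | cons y a' ih =>
    intro l b u v hnd h1 h2
    subst h1
    cases b with
    | nil =>
      simp only [List.nil_append, List.cons_append] at h2
      obtain ⟨hyx, h2'⟩ := List.cons_eq_cons.1 h2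
      exfalso
      have hx : x ∈ a' ++ x :: u := List.mem_append_right _ (List.mem_cons_self)
      exact (List.nodup_cons.1 hnd).1 (by rw [hyx]; exact hx)
    | cons z b' =>
      simp only [List.cons_append] at h2
      obtain ⟨rfl, h2'⟩ := List.cons_eq_cons.1 h2
      rw [ih (List.nodup_cons.1 hnd).2 rfl h2']

lemma cycOnce_of_nodup {l : List (Q × Option L × Q)} (h : l.Nodup) :
    ∀ c a b a' b', IsCycle c → l = a ++ c ++ b → l = a' ++ c ++ b' → a = a' := by
  intro c a b a' b' hc h1 h2
  obtain ⟨hne, -⟩ := hc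
  cases c with
  | nil => exact absurd rfl hne
  | cons t ct =>
    have h1' : l = a ++ t :: (ct ++ b) := by simpa using h1
    have h2' : l = a' ++ t :: (ct ++ b') := by simpa using h2
    exact nodup_eq_prefix h h1' h2'

lemma preCandidate_of_nodup {A : LTS Q L} {s e : Q} {r : List (Q × Option L × Q)}
    (h : Steps A s r e) (hnd : r.Nodup) : PreCandidate A s r :=
  ⟨⟨e, h⟩, cycOnce_of_nodup hnd⟩

lemma preCandidate_prefix {A : LTS Q L} {s : Q} {r r' : List (Q × Option L × Q)}
    (h : PreCandidate A s r) (hp : r' <+: r) : PreCandidate A s r' := by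
  obtain ⟨⟨e, hs⟩, hcyc⟩ := h
  obtain ⟨z, rfl⟩ := hp
  constructor
  · refine ⟨stAt s (r' ++ z) r'.length, ?_⟩
    have := steps_take hs r'.length
    rwa [List.take_left] at this
  · intro c a b a' b' hc h1 h2
    refine hcyc c a (b ++ z) a' (b' ++ z) hc ?_ ?_
    · rw [h1]; simp [List.append_assoc]
    · rw [h2]; simp [List.append_assoc]

lemma srcs_append_last {A : LTS Q L} {s e : Q} {r : List (Q × Option L × Q)}
    (h : Steps A s r e) (ℓ : Option L) (e' : Q) :
    (r ++ [(e, ℓ, e')]).map (fun t => t.1) = s :: r.map (fun t => t.2.2) := by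
  induction h with
  | nil => simp
  | cons ht hs ih => simpa using ih

lemma nodup_append_last {A : LTS Q L} {s e : Q} {r : List (Q × Option L × Q)}
    (h : Steps A s r e) (hsn : (s :: r.map (fun t => t.2.2)).Nodup) (ℓ : Option L) (e' : Q) :
    (r ++ [(e, ℓ, e')]).Nodup := by
  have h2 : ((r ++ [(e, ℓ, e')]).map (fun t => t.1)).Nodup := by
    rw [srcs_append_last h ℓ e']; exact hsn
  exact h2.of_map

lemma take_append_cons_of_le {γ : Type} {l1 l2 : List γ} {t : γ} {k : ℕ} (hk : k ≤ l1.length) :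
    (l1 ++ t :: l2).take k = l1.take k := by
  rw [List.take_append, Nat.sub_eq_zero_of_le hk, List.take_zero,
    List.append_nil]

lemma take_append_cons_of_gt {γ : Type} {l1 l2 : List γ} {t : γ} {k : ℕ} (hk : l1.length < k) :
    (l1 ++ t :: l2).take k = l1 ++ t :: (l2.take (k - l1.length - 1)) := by
  rw [List.take_append, List.take_of_length_le (le_of_lt hk)]
  obtain ⟨d, hd⟩ : ∃ d, k - l1.length = d + 1 := ⟨k - l1.length - 1, by omega⟩
  rw [hd, List.take_succ_cons, Nat.add_sub_cancel]

instance finiteOption {γ : Type} [Finite γ] : Finite (Option γ) := by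
  cases nonempty_fintype γ; infer_instance

/-- Any run satisfying the "each cycle occurs at most once" condition has bounded length. -/
lemma length_le_of_cycOnce [Finite Q] [Finite L] (A : LTS Q L) :
    ∃ B : ℕ, ∀ (s e : Q) (r : List (Q × Option L × Q)), Steps A s r e →
      (∀ c a b a' b', IsCycle c → r = a ++ c ++ b → r = a' ++ c ++ b' → a = a') →
      r.length ≤ B := by
  classical
  set N := Nat.card Q with hN
  have hfin : {l : List (Q × Option L × Q) | l.length ≤ N}.Finite :=
    List.finite_length_le _ N
  set K := hfin.toFinset.card with hK
  refine ⟨N * (K + 1), ?_⟩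
  intro s e r hsteps hcyc
  by_contra hlen
  push_neg at hlen
  cases nonempty_fintype Q
  have hNQ : N = Fintype.card Q := by rw [hN, Nat.card_eq_fintype_card]
  have hNpos : 1 ≤ N := by
    rw [hNQ]
    exact Fintype.card_pos_iff.2 ⟨s⟩
  -- in each window of length N find a cycle
  have hex : ∀ k : Fin (K + 1), ∃ a b : ℕ, a < b ∧ b ≤ N ∧
      stAt s r ((k : ℕ) * N + a) = stAt s r ((k : ℕ) * N + b) := by
    intro k
    have hcard : Fintype.card Q < Fintype.card (Fin (N + 1)) := by
      rw [Fintype.card_fin, ← hNQ]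
      exact Nat.lt_succ_self N
    obtain ⟨x, y, hxy, hfeq⟩ := Fintype.exists_ne_map_eq_of_card_lt
      (fun x : Fin (N + 1) => stAt s r ((k : ℕ) * N + (x : ℕ))) hcard
    have hvne : (x : ℕ) ≠ (y : ℕ) := fun hc => hxy (Fin.ext hc)
    rcases lt_or_gt_of_ne hvne with hlt | hlt
    · exact ⟨x, y, hlt, Nat.lt_succ_iff.1 y.isLt, hfeq⟩
    · exact ⟨y, x, hlt, Nat.lt_succ_iff.1 x.isLt, hfeq.symm⟩
  choose aF bF hab hbN heq using hex
  have hKN : N * (K + 1) ≤ r.length := hlen.le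
  have hble : ∀ k : Fin (K + 1), (k : ℕ) * N + bF k ≤ r.length := by
    intro k
    have h1 : (k : ℕ) ≤ K := Nat.lt_succ_iff.1 k.isLt
    have h2 : (k : ℕ) * N + bF k ≤ K * N + N :=
      Nat.add_le_add (Nat.mul_le_mul_right N h1) (hbN k)
    have h3 : K * N + N = N * (K + 1) := by ring
    omega
  -- the cycle found in window k
  set c : Fin (K + 1) → List (Q × Option L × Q) :=
    fun k => (r.drop ((k : ℕ) * N + aF k)).take (bF k - aF k) with hc
  have hclen : ∀ k, (c k).length = bF k - aF k := by
    intro k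
    rw [hc]
    simp only [List.length_take, List.length_drop]
    have := hble k
    have := hab k
    omega
  have hcne : ∀ k, c k ≠ [] := by
    intro k hnil
    have := hclen k
    rw [hnil] at this
    simp only [List.length_nil] at this
    have := hab k
    omega
  have hdecomp : ∀ k : Fin (K + 1), r = r.take ((k : ℕ) * N + aF k) ++ c k ++ r.drop ((k : ℕ) * N + bF k) := by
    intro k
    rw [hc]
    have h1 : r.drop ((k : ℕ) * N + aF k) =
        (r.drop ((k : ℕ) * N + aF k)).take (bF k - aF k) ++
          (r.drop ((k : ℕ) * N + aF k)).drop (bF k - aF k) := (List.take_append_drop _ _).symm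
    have h2 : (r.drop ((k : ℕ) * N + aF k)).drop (bF k - aF k) =
        r.drop ((k : ℕ) * N + bF k) := by
      rw [List.drop_drop]
      congr 1
      have := hab k
      omega
    conv_lhs => rw [← List.take_append_drop ((k : ℕ) * N + aF k) r]
    rw [h1, h2, List.append_assoc]
  have hgetc : ∀ (k : Fin (K + 1)) (j : ℕ) (hj : j < (c k).length),
      (c k)[j]'hj = r[(k : ℕ) * N + aF k + j]'(by
        have h1 := hclen k; have h2 := hble k; have h3 := hab k
        rw [h1] at hj; omega) := by
    intro k j hj
    have hj' : j < ((r.drop ((k : ℕ) * N + aF k)).take (bF k - aF k)).length := hj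
    show ((r.drop ((k : ℕ) * N + aF k)).take (bF k - aF k))[j]'hj' = _
    rw [List.getElem_take, List.getElem_drop]
  have hcycle : ∀ k, IsCycle (c k) := by
    intro k
    refine ⟨hcne k, ?_⟩
    have hlenpos : 0 < (c k).length := List.length_pos_iff.2 (hcne k)
    have hhead : (c k).head? = some ((c k)[0]'hlenpos) := by
      rw [List.head?_eq_getElem?, List.getElem?_eq_getElem hlenpos]
    have hlast : (c k).getLast? = some ((c k)[(c k).length - 1]'(by omega)) := by
      rw [List.getLast?_eq_getElem?, List.getElem?_eq_getElem (by omega)]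
    rw [hhead, hlast]
    simp only [Option.map_some]
    congr 1
    rw [hgetc k 0 hlenpos, hgetc k ((c k).length - 1) (by omega)]
    have hru := run_get hsteps
    have e1 := (hru ((k : ℕ) * N + aF k) (by
      have h1 := hclen k; have h2 := hble k; have h3 := hab k; omega)).1
    have e2 := (hru ((k : ℕ) * N + aF k + ((c k).length - 1)) (by
      have h1 := hclen k; have h2 := hble k; have h3 := hab k; omega)).2
    have hidx : (k : ℕ) * N + aF k + ((c k).length - 1) + 1 = (k : ℕ) * N + bF k := by
      have h1 := hclen k; have h3 := hab k; omega
    simp only [Nat.add_zero] at e1 ⊢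
    rw [e1, e2, hidx, ← heq k]
  -- pigeonhole on the cycles
  have hmaps : ∀ k : Fin (K + 1), k ∈ (Finset.univ : Finset (Fin (K + 1))) →
      c k ∈ hfin.toFinset := by
    intro k _
    rw [Set.Finite.mem_toFinset]
    show (c k).length ≤ N
    rw [hclen k]
    have := hbN k
    omega
  obtain ⟨k, -, k', -, hkk', hceq⟩ :=
    Finset.exists_ne_map_eq_of_card_lt_of_maps_to (by
      rw [Finset.card_univ, Fintype.card_fin, ← hK]
      exact Nat.lt_succ_self K) hmaps
  -- wlog k < k'
  have hmain : ∀ k k' : Fin (K + 1), (k : ℕ) < (k' : ℕ) → c k = c k' → False := by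
    intro k k' hlt hceq
    have hia : (k : ℕ) * N + aF k < (k' : ℕ) * N + aF k' := by
      have h1 : aF k < N := lt_of_lt_of_le (hab k) (hbN k)
      have h2 : ((k : ℕ) + 1) * N ≤ (k' : ℕ) * N := Nat.mul_le_mul_right N hlt
      have h3 : ((k : ℕ) + 1) * N = (k : ℕ) * N + N := by ring
      omega
    have hd1 := hdecomp k
    have hd2 := hdecomp k'
    rw [hceq] at hd1
    have := hcyc (c k') (r.take ((k : ℕ) * N + aF k)) (r.drop ((k : ℕ) * N + bF k))
      (r.take ((k' : ℕ) * N + aF k')) (r.drop ((k' : ℕ) * N + bF k'))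
      (hcycle k') hd1 hd2
    have hlen1 : (r.take ((k : ℕ) * N + aF k)).length = (k : ℕ) * N + aF k := by
      rw [List.length_take]
      have h2 := hble k
      have h3 := hab k
      omega
    have hlen2 : (r.take ((k' : ℕ) * N + aF k')).length = (k' : ℕ) * N + aF k' := by
      rw [List.length_take]
      have h2 := hble k'
      have h3 := hab k'
      omega
    rw [this] at hlen1
    omega
  have hvne : (k : ℕ) ≠ (k' : ℕ) := fun hcc => hkk' (Fin.ext hcc)
  rcases lt_or_gt_of_ne hvne with h | h
  · exact hmain k k' h hceq
  · exact hmain k' k h hceq.symm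

/-- every pre-candidate branch extends to a candidate branch -/
lemma exists_candidate_extension [Finite Q] [Finite L] {A : LTS Q L} {s : Q}
    {σ : List (Q × Option L × Q)} (h : PreCandidate A s σ) :
    ∃ z, Candidate A s (σ ++ z) := by
  obtain ⟨B, hB⟩ := length_le_of_cycOnce A
  suffices aux : ∀ (n : ℕ) (σ : List (Q × Option L × Q)), PreCandidate A s σ →
      B + 1 - σ.length ≤ n → ∃ ρ, Candidate A s ρ ∧ σ <+: ρ by
    obtain ⟨ρ, hρ, hpre⟩ := aux (B + 1) σ h (by omega)
    obtain ⟨z, rfl⟩ := hpre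
    exact ⟨z, hρ⟩
  intro n
  induction n with
  | zero =>
    intro σ hσ hn
    exfalso
    obtain ⟨⟨e, hs⟩, hcyc⟩ := hσ
    have := hB s e σ hs hcyc
    omega
  | succ n ih =>
    intro σ hσ hn
    by_cases hmax : ∀ π', PreCandidate A s π' → σ <+: π' → π' = σ
    · exact ⟨σ, ⟨hσ, hmax⟩, List.prefix_refl σ⟩
    · push_neg at hmax
      obtain ⟨π', hπ', hpre, hne⟩ := hmax
      have hlt : σ.length < π'.length := by
        rcases lt_or_eq_of_le hpre.length_le with h | h
        · exact h
        · exact absurd (hpre.eq_of_length h).symm hne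
      have hbnd : π'.length ≤ B := by
        obtain ⟨⟨e, hs⟩, hcyc⟩ := hπ'
        exact hB s e π' hs hcyc
      have hτpre : PreCandidate A s (π'.take (σ.length + 1)) :=
        preCandidate_prefix hπ' (List.take_prefix _ _)
      have hστ : σ <+: π'.take (σ.length + 1) := by
        refine List.prefix_of_prefix_length_le hpre (List.take_prefix _ _) ?_
        rw [List.length_take]
        omega
      have hlen : (π'.take (σ.length + 1)).length = σ.length + 1 := by
        rw [List.length_take]
        omega
      obtain ⟨ρ, hρ, hρpre⟩ := ih _ hτpre (by omega)
      exact ⟨ρ, hρ, hστ.trans hρpre⟩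

end CandLemmas


section Refute

open List

variable {P M Q : Type} [DecidableEq P] {p q : P} {hpq : p ≠ q} {m : M}

lemma IsPrefix.head?_eq' {γ : Type} {l1 l2 : List γ} (h : l1 <+: l2) (hne : l1 ≠ []) :
    l1.head? = l2.head? := by
  obtain ⟨z, rfl⟩ := h
  cases l1 with
  | nil => exact absurd rfl hne
  | cons a t => rfl

lemma projLabel_self_send :
    projLabel p (⟨p, q, hpq, m⟩ : Interaction P M) = some (Act.send p q m) :=
  (projLabel_send_iff (hpq := hpq)).2 rfl

lemma p_mem_mα : p ∈ ptpI (⟨p, q, hpq, m⟩ : Interaction P M) := by simp [ptpI]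

lemma q_mem_mα : q ∈ ptpI (⟨p, q, hpq, m⟩ : Interaction P M) := by simp [ptpI]

lemma partner_p_mα : partner p (⟨p, q, hpq, m⟩ : Interaction P M) = q := by
  simp [partner]

lemma partner_q_mα : partner q (⟨p, q, hpq, m⟩ : Interaction P M) = p := by
  simp [partner, hpq]

/-- Key position analysis: if a prefix of a run of shape `πA ++ (u,b,u') :: r`
(with `πA` avoiding `x`) is followed by a label involving `x`, then either the prefix is
exactly `πA` and the label is `b`, or the prefix contains all of `πA ++ [(u,b,u')]`. -/
lemma posn {x : P} {πA r : List (Q × Option (Interaction P M) × Q)} {u u' : Q}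
    {b α1 : Interaction P M} (hA : Avoids x πA)
    {πh : List (Q × Option (Interaction P M) × Q)}
    (hpre : πh <+: (πA ++ (u, some b, u') :: r))
    (htr : traceOf πh ++ [α1] <+: traceOf (πA ++ (u, some b, u') :: r))
    (hx : x ∈ ptpI α1) :
    (πh = πA ∧ α1 = b) ∨ ((πA ++ [(u, some b, u')]) <+: πh) := by
  have hπAτ : πA <+: (πA ++ (u, some b, u') :: r) := πA.prefix_append _
  have htrτ : traceOf (πA ++ (u, some b, u') :: r) = traceOf πA ++ b :: traceOf r := by
    rw [traceOf_append]
    congr 1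
  rcases le_or_gt πh.length πA.length with hle | hlt
  · have hπhA : πh <+: πA := List.prefix_of_prefix_length_le hpre hπAτ hle
    have htrlen : (traceOf πh).length = πh.length := (hA.of_prefix hπhA).traceOf_length
    have hAlen : (traceOf πA).length = πA.length := hA.traceOf_length
    rcases lt_or_eq_of_le hle with hlt2 | heq2
    · exfalso
      have h1 : traceOf πh ++ [α1] <+: traceOf πA := by
        refine List.prefix_of_prefix_length_le htr (traceOf_prefix hπAτ) ?_
        rw [List.length_append, List.length_singleton, htrlen, hAlen]
        omega
      have h2 : α1 ∈ traceOf πA :=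
        h1.subset (List.mem_append_right _ (List.mem_singleton_self α1))
      exact (hA.not_mem_trace hx) h2
    · left
      have hπhπA : πh = πA := hπhA.eq_of_length heq2
      subst hπhπA
      refine ⟨rfl, ?_⟩
      have h1 : traceOf πh ++ [b] <+: traceOf (πh ++ (u, some b, u') :: r) := by
        rw [htrτ]
        exact ⟨traceOf r, by simp⟩
      have h2 : traceOf πh ++ [α1] = traceOf πh ++ [b] := by
        refine (List.prefix_of_prefix_length_le htr h1 (by simp)).eq_of_length (by simp)
      simpa using h2
  · right
    refine List.prefix_of_prefix_length_le ⟨r, by simp⟩ hpre ?_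
    rw [List.length_append, List.length_singleton]
    omega

/-- R1: refute `FullyAware p` for a run passing through the interaction vs a `q`-free run. -/
lemma refute_FA_p1 {πA r1 τ2 : List (Q × Option (Interaction P M) × Q)} {u u' : Q}
    (hne : πA ≠ []) (hA1 : Avoids p πA) (hA2 : Avoids q τ2) :
    ¬ FullyAware p (πA ++ (u, some (⟨p, q, hpq, m⟩ : Interaction P M), u') :: r1) τ2 := by
  intro h
  cases h with
  | first h1 h2 hne12 hp1 hp2 hhd1 hhd2 =>
    rename_i α1 α2
    cases πA with
    | nil => exact absurd rfl hne
    | cons t0 πA' =>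
      obtain ⟨b0, hb0, hpb0⟩ := hA1 t0 (List.mem_cons_self)
      have : traceOf ((t0 :: πA') ++ (u, some (⟨p, q, hpq, m⟩ : Interaction P M), u') :: r1) =
          b0 :: traceOf (πA' ++ (u, some (⟨p, q, hpq, m⟩ : Interaction P M), u') :: r1) := by
        rw [List.cons_append, traceOf_cons, hb0]
      rw [this] at hhd1
      cases hhd1
      exact hpb0 hp1
  | later h1 h2 hne12 hp1 hp2 hpre1 hne1 hpre2 hne2 hproj haw1 haw2 htr1 htr2
      hnot1 hnot2 =>
    rename_i π₁ π₂ α1 α2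
    rcases posn hA1 hpre1 htr1 hp1 with ⟨hπeq, hαeq⟩ | hσpre
    · subst hαeq
      rw [partner_p_mα] at haw1
      exact (hA2.of_prefix hpre2).not_ptpRun haw1.mem_right
    · have hmem : (⟨p, q, hpq, m⟩ : Interaction P M) ∈ traceOf π₁ := by
        refine (traceOf_prefix hσpre).subset ?_
        rw [traceOf_append]
        refine List.mem_append_right _ ?_
        simp [traceOf]
      have hsend : Act.send p q m ∈ projWord p (traceOf π₁) :=
        (send_mem_projWord_iff (hpq := hpq)).2 hmem
      rw [hproj] at hsend
      have h2' : (⟨p, q, hpq, m⟩ : Interaction P M) ∈ traceOf τ2 :=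
        (traceOf_prefix hpre2).subset ((send_mem_projWord_iff (hpq := hpq)).1 hsend)
      exact (hA2.not_mem_trace (q_mem_mα (hpq := hpq))) h2'

/-- R2: refute `FullyAware p` when both runs pass through the interaction. -/
lemma refute_FA_p2 {πA r1 πB r2 : List (Q × Option (Interaction P M) × Q)} {u u' v v' : Q}
    (hneA : πA ≠ []) (hA1 : Avoids p πA) (hA2 : Avoids q πB)
    (hδ : ∃ b ∈ traceOf πB, p ∈ ptpI b) :
    ¬ FullyAware p (πA ++ (u, some (⟨p, q, hpq, m⟩ : Interaction P M), u') :: r1)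
        (πB ++ (v, some (⟨p, q, hpq, m⟩ : Interaction P M), v') :: r2) := by
  intro h
  cases h with
  | first h1 h2 hne12 hp1 hp2 hhd1 hhd2 =>
    rename_i α1 α2
    cases πA with
    | nil => exact absurd rfl hneA
    | cons t0 πA' =>
      obtain ⟨b0, hb0, hpb0⟩ := hA1 t0 (List.mem_cons_self)
      have : traceOf ((t0 :: πA') ++ (u, some (⟨p, q, hpq, m⟩ : Interaction P M), u') :: r1) =
          b0 :: traceOf (πA' ++ (u, some (⟨p, q, hpq, m⟩ : Interaction P M), u') :: r1) := by
        rw [List.cons_append, traceOf_cons, hb0]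
      rw [this] at hhd1
      cases hhd1
      exact hpb0 hp1
  | later h1 h2 hne12 hp1 hp2 hpre1 hne1 hpre2 hne2 hproj haw1 haw2 htr1 htr2
      hnot1 hnot2 =>
    rename_i π₁ π₂ α1 α2
    rcases posn hA1 hpre1 htr1 hp1 with ⟨hπeq, hαeq⟩ | hσpre
    · subst hαeq
      refine hnot1 ?_
      rw [traceOf_append]
      refine List.mem_append_right _ ?_
      simp [traceOf]
    · obtain ⟨z, hz⟩ := hσpre
      have t2 : projWord p [(⟨p, q, hpq, m⟩ : Interaction P M)] = [Act.send p q m] := by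
        simp [projWord, projLabel_self_send (hpq := hpq)]
      have hh1 : (projWord p (traceOf π₁)).head? = some (Act.send p q m) := by
        rw [← hz, traceOf_append, traceOf_append, projWord_append, projWord_append,
          hA1.projWord_nil]
        have : traceOf [((u, some (⟨p, q, hpq, m⟩ : Interaction P M), u') :
            Q × Option (Interaction P M) × Q)] = [(⟨p, q, hpq, m⟩ : Interaction P M)] := by
          simp [traceOf]
        rw [this, t2]
        simp
      have hh2 : (projWord p (traceOf π₂)).head? = some (Act.send p q m) := by
        rw [← hproj]; exact hh1
      have hne2' : projWord p (traceOf π₂) ≠ [] := by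
        intro hc; rw [hc] at hh2; cases hh2
      have hpp : projWord p (traceOf π₂) <+:
          projWord p (traceOf (πB ++ (v, some (⟨p, q, hpq, m⟩ : Interaction P M), v') :: r2)) :=
        projWord_prefix _ (traceOf_prefix hpre2)
      have hW : projWord p (traceOf (πB ++ (v, some (⟨p, q, hpq, m⟩ : Interaction P M), v') :: r2)) =
          projWord p (traceOf πB) ++ Act.send p q m :: projWord p (traceOf r2) := by
        rw [traceOf_append, projWord_append]
        congr 1
        rw [traceOf_cons]
        show projWord p ((⟨p, q, hpq, m⟩ : Interaction P M) :: traceOf r2) = _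
        simp [projWord, projLabel_self_send (hpq := hpq)]
      have hWne : projWord p (traceOf πB) ≠ [] := by
        obtain ⟨b, hb, hpb⟩ := hδ
        obtain ⟨a, ha⟩ := projLabel_isSome_of_mem hpb
        exact List.ne_nil_of_mem (mem_projWord_iff.2 ⟨b, hb, ha⟩)
      have hh3 := IsPrefix.head?_eq' hpp hne2'
      rw [hW] at hh3
      cases hWd : projWord p (traceOf πB) with
      | nil => exact hWne hWd
      | cons w0 ws =>
        rw [hWd, List.cons_append, List.head?_cons] at hh3
        rw [hh2] at hh3
        have hw0 : w0 = Act.send p q m := by cases hh3; rfl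
        have hsendW : Act.send p q m ∈ projWord p (traceOf πB) := by
          rw [hWd, hw0]; exact List.mem_cons_self
        have : (⟨p, q, hpq, m⟩ : Interaction P M) ∈ traceOf πB :=
          (send_mem_projWord_iff (hpq := hpq)).1 hsendW
        exact hA2.not_mem_trace (q_mem_mα (hpq := hpq)) this

/-- R3: refute `FullyAware q` for a `p`-free run vs a run passing through the interaction. -/
lemma refute_FA_q3 {τ1 πB r2 : List (Q × Option (Interaction P M) × Q)} {v v' : Q}
    (hneB : πB ≠ []) (hA1 : Avoids p τ1) (hA2 : Avoids q πB) :
    ¬ FullyAware q τ1 (πB ++ (v, some (⟨p, q, hpq, m⟩ : Interaction P M), v') :: r2) := by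
  intro h
  cases h with
  | first h1 h2 hne12 hp1 hp2 hhd1 hhd2 =>
    rename_i α1 α2
    cases πB with
    | nil => exact absurd rfl hneB
    | cons t0 πB' =>
      obtain ⟨b0, hb0, hpb0⟩ := hA2 t0 (List.mem_cons_self)
      have : traceOf ((t0 :: πB') ++ (v, some (⟨p, q, hpq, m⟩ : Interaction P M), v') :: r2) =
          b0 :: traceOf (πB' ++ (v, some (⟨p, q, hpq, m⟩ : Interaction P M), v') :: r2) := by
        rw [List.cons_append, traceOf_cons, hb0]
      rw [this] at hhd2
      cases hhd2
      exact hpb0 hp2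
  | later h1 h2 hne12 hp1 hp2 hpre1 hne1 hpre2 hne2 hproj haw1 haw2 htr1 htr2
      hnot1 hnot2 =>
    rename_i π₁ π₂ α1 α2
    rcases posn hA2 hpre2 htr2 hp2 with ⟨hπeq, hαeq⟩ | hσpre
    · subst hαeq
      rw [partner_q_mα (hpq := hpq)] at haw2
      exact (hA1.of_prefix hpre1).not_ptpRun haw2.mem_left
    · have hmem : (⟨p, q, hpq, m⟩ : Interaction P M) ∈ traceOf π₂ := by
        refine (traceOf_prefix hσpre).subset ?_
        rw [traceOf_append]
        refine List.mem_append_right _ ?_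
        simp [traceOf]
      have hrecv : Act.recv p q m ∈ projWord q (traceOf π₂) :=
        (recv_mem_projWord_iff (hpq := hpq)).2 hmem
      rw [← hproj] at hrecv
      have h2' : (⟨p, q, hpq, m⟩ : Interaction P M) ∈ traceOf τ1 :=
        (traceOf_prefix hpre1).subset ((recv_mem_projWord_iff (hpq := hpq)).1 hrecv)
      exact (hA1.not_mem_trace (p_mem_mα (hpq := hpq))) h2'

end Refute


section SpanUse

open List

variable {P M Q : Type} [DecidableEq P] {p q : P} {hpq : p ≠ q} {m : M}
variable {A : LTS Q (Interaction P M)}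

lemma use_span (hwf : WellFormed A) {s s1 s2 : Q} {γ1 γ2 : Interaction P M}
    (ht1 : A.Trans s (some γ1) s1) (ht2 : A.Trans s (some γ2) s2)
    {x : P} (hx : x ∈ ptps A) (hxn : x ∉ ptpI γ1 ∨ x ∉ ptpI γ2)
    {τ1 τ2 r1 r2 : List (Q × Option (Interaction P M) × Q)}
    (he1 : τ1 = (s, some γ1, s1) :: r1) (he2 : τ2 = (s, some γ2, s2) :: r2)
    (hspan : Span A s τ1 τ2)
    (hproj : projWord x (traceOf τ1) ≠ projWord x (traceOf τ2)) :
    FullyAware x τ1 τ2 ∨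
    ((x ∉ ptpRun τ1 ∧ FirstWithAware x τ2 τ1 τ2 ∧
        ∀ π', Candidate A s (τ1 ++ π') → FirstWithAware x π' τ1 τ2) ∨
     (x ∉ ptpRun τ2 ∧ FirstWithAware x τ1 τ1 τ2 ∧
        ∀ π', Candidate A s (τ2 ++ π') → FirstWithAware x π' τ1 τ2)) := by
  obtain ⟨T, hT1, hT2, hT3, hT4, hT5⟩ := hwf.2.2 s
  have hm1 : ((γ1, s1) : Interaction P M × Q) ∈ outT A s := ht1
  have hm2 : ((γ2, s2) : Interaction P M × Q) ∈ outT A s := ht2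
  obtain ⟨T1, hT1m, h1m⟩ := hT2 _ hm1
  obtain ⟨T2, hT2m, h2m⟩ := hT2 _ hm2
  by_cases hTT : T1 = T2
  · subst hTT
    have hxn' : x ∉ ⋂ t ∈ T1, ptpI t.1 := by
      intro hmem
      rw [Set.mem_iInter₂] at hmem
      rcases hxn with h | h
      · exact h (hmem (γ1, s1) h1m)
      · exact h (hmem (γ2, s2) h2m)
    exact (hT5 T1 hT1m).2 x hx hxn' τ1 τ2 hspan ⟨γ1, s1, r1, he1, h1m⟩
      ⟨γ2, s2, r2, he2, h2m⟩ hproj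
  · exfalso
    obtain ⟨hdisj, hsq⟩ := hT4 T1 hT1m T2 hT2m hTT
    obtain ⟨w, hw1, hw2⟩ := hsq γ1 s1 γ2 s2 h1m h2m
    obtain ⟨z, hz1, hz2⟩ := ws_share hwf.1 ht1 hw1
    have : z ∈ ptpTs T1 ∩ ptpTs T2 := ⟨⟨(γ1, s1), h1m, hz1⟩, ⟨(γ2, s2), h2m, hz2⟩⟩
    rw [hdisj] at this
    exact this

lemma mα_mem_trace_mid {π w : List (Q × Option (Interaction P M) × Q)} {u u' : Q} :
    (⟨p, q, hpq, m⟩ : Interaction P M) ∈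
      traceOf (π ++ (u, some (⟨p, q, hpq, m⟩ : Interaction P M), u') :: w) := by
  rw [traceOf_append]
  refine List.mem_append_right _ ?_
  simp [traceOf]

lemma p_mem_ptpRun_mid {π w : List (Q × Option (Interaction P M) × Q)} {u u' : Q} :
    p ∈ ptpRun (π ++ (u, some (⟨p, q, hpq, m⟩ : Interaction P M), u') :: w) :=
  ⟨(u, some (⟨p, q, hpq, m⟩ : Interaction P M), u'),
    List.mem_append_right _ (List.mem_cons_self), ⟨p, q, hpq, m⟩, rfl, p_mem_mα (hpq := hpq)⟩

lemma q_mem_ptpRun_mid {π w : List (Q × Option (Interaction P M) × Q)} {u u' : Q} :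
    q ∈ ptpRun (π ++ (u, some (⟨p, q, hpq, m⟩ : Interaction P M), u') :: w) :=
  ⟨(u, some (⟨p, q, hpq, m⟩ : Interaction P M), u'),
    List.mem_append_right _ (List.mem_cons_self), ⟨p, q, hpq, m⟩, rfl, q_mem_mα (hpq := hpq)⟩

lemma not_ptpRun_nil {x : P} : x ∉ ptpRun ([] : List (Q × Option (Interaction P M) × Q)) := by
  rintro ⟨t, ht, -⟩
  simp at ht

lemma proj_ne_IIb {π1 π2 r1 r2 : List (Q × Option (Interaction P M) × Q)} {u u' v v' : Q}
    (hA1 : Avoids p π1) (hA2 : Avoids q π2)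
    (hδ : ∃ b ∈ traceOf π2, p ∈ ptpI b) :
    projWord p (traceOf (π1 ++ (u, some (⟨p, q, hpq, m⟩ : Interaction P M), u') :: r1)) ≠
      projWord p (traceOf (π2 ++ (v, some (⟨p, q, hpq, m⟩ : Interaction P M), v') :: r2)) := by
  intro hE
  have hW1 : projWord p (traceOf (π1 ++ (u, some (⟨p, q, hpq, m⟩ : Interaction P M), u') :: r1)) =
      Act.send p q m :: projWord p (traceOf r1) := by
    rw [traceOf_append, projWord_append, hA1.projWord_nil, List.nil_append, traceOf_cons]
    show projWord p ((⟨p, q, hpq, m⟩ : Interaction P M) :: traceOf r1) = _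
    simp [projWord, projLabel_self_send (hpq := hpq)]
  have hW2 : projWord p (traceOf (π2 ++ (v, some (⟨p, q, hpq, m⟩ : Interaction P M), v') :: r2)) =
      projWord p (traceOf π2) ++ Act.send p q m :: projWord p (traceOf r2) := by
    rw [traceOf_append, projWord_append, traceOf_cons]
    congr 1
    show projWord p ((⟨p, q, hpq, m⟩ : Interaction P M) :: traceOf r2) = _
    simp [projWord, projLabel_self_send (hpq := hpq)]
  rw [hW1, hW2] at hE
  have hWne : projWord p (traceOf π2) ≠ [] := by
    obtain ⟨b, hb, hpb⟩ := hδ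
    obtain ⟨a, ha⟩ := projLabel_isSome_of_mem hpb
    exact List.ne_nil_of_mem (mem_projWord_iff.2 ⟨b, hb, ha⟩)
  cases hWd : projWord p (traceOf π2) with
  | nil => exact hWne hWd
  | cons w0 ws =>
    rw [hWd, List.cons_append] at hE
    have hw0 : w0 = Act.send p q m := by
      have := congrArg List.head? hE
      simp at this
      exact this.symm
    have hsendW : Act.send p q m ∈ projWord p (traceOf π2) := by
      rw [hWd, hw0]; exact List.mem_cons_self
    have : (⟨p, q, hpq, m⟩ : Interaction P M) ∈ traceOf π2 :=
      (send_mem_projWord_iff (hpq := hpq)).1 hsendW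
    exact hA2.not_mem_trace (q_mem_mα (hpq := hpq)) this

/-- closing the case where both span components pass through the `p→q:m` transition -/
lemma close_IIb (hwf : WellFormed A) {s c1 c2 u u' v v' : Q} {γ1 γ2 : Interaction P M}
    {π1r π2r w1 w2 : List (Q × Option (Interaction P M) × Q)}
    (ht1 : A.Trans s (some γ1) c1) (ht2 : A.Trans s (some γ2) c2)
    (hp : p ∈ ptps A) (hpγ1 : p ∉ ptpI γ1)
    (hA1 : Avoids p ((s, some γ1, c1) :: π1r))
    (hA2 : Avoids q ((s, some γ2, c2) :: π2r))
    (hδ2 : ∃ b ∈ traceOf ((s, some γ2, c2) :: π2r), p ∈ ptpI b)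
    (hspan : Span A s
      (((s, some γ1, c1) :: π1r) ++ (u, some (⟨p, q, hpq, m⟩ : Interaction P M), u') :: w1)
      (((s, some γ2, c2) :: π2r) ++ (v, some (⟨p, q, hpq, m⟩ : Interaction P M), v') :: w2)) :
    False := by
  have he1 : ((s, some γ1, c1) :: π1r) ++ (u, some (⟨p, q, hpq, m⟩ : Interaction P M), u') :: w1 =
      (s, some γ1, c1) :: (π1r ++ (u, some (⟨p, q, hpq, m⟩ : Interaction P M), u') :: w1) := by
    rw [List.cons_append]
  have he2 : ((s, some γ2, c2) :: π2r) ++ (v, some (⟨p, q, hpq, m⟩ : Interaction P M), v') :: w2 =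
      (s, some γ2, c2) :: (π2r ++ (v, some (⟨p, q, hpq, m⟩ : Interaction P M), v') :: w2) := by
    rw [List.cons_append]
  rcases use_span hwf ht1 ht2 hp (Or.inl hpγ1) he1 he2 hspan
      (proj_ne_IIb (hpq := hpq) hA1 hA2 hδ2) with hfa | ⟨hnp1, -, -⟩ | ⟨hnp2, -, -⟩
  · exact refute_FA_p2 (hpq := hpq) (List.cons_ne_nil _ _) hA1 hA2 hδ2 hfa
  · exact hnp1 (p_mem_ptpRun_mid (hpq := hpq))
  · exact hnp2 (p_mem_ptpRun_mid (hpq := hpq))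

lemma ptpStep_mα_cases {u u' : Q} {p' : P}
    (h : p' ∈ ptpStep ((u, some (⟨p, q, hpq, m⟩ : Interaction P M), u') :
      Q × Option (Interaction P M) × Q)) : p' = p ∨ p' = q := by
  have h2 := mem_ptpStep_iff.1 h
  rw [mem_ptpI_iff] at h2
  exact h2

/-- closing the case where only the first span component passes through `p→q:m`
and the second is `q`-free -/
lemma close_I (hwf : WellFormed A) {s c1 c2 u u' : Q} {γ1 γ2 : Interaction P M}
    {π1r π2r' w1 : List (Q × Option (Interaction P M) × Q)}
    (ht1 : A.Trans s (some γ1) c1) (ht2 : A.Trans s (some γ2) c2)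
    (hp : p ∈ ptps A) (hpγ1 : p ∉ ptpI γ1)
    (hA1 : Avoids p ((s, some γ1, c1) :: π1r))
    (hA2t : Avoids q ((s, some γ2, c2) :: π2r'))
    (hspan : Span A s
      (((s, some γ1, c1) :: π1r) ++ (u, some (⟨p, q, hpq, m⟩ : Interaction P M), u') :: w1)
      ((s, some γ2, c2) :: π2r')) : False := by
  have he1 : ((s, some γ1, c1) :: π1r) ++ (u, some (⟨p, q, hpq, m⟩ : Interaction P M), u') :: w1 =
      (s, some γ1, c1) :: (π1r ++ (u, some (⟨p, q, hpq, m⟩ : Interaction P M), u') :: w1) := by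
    rw [List.cons_append]
  have hin : Act.send p q m ∈ projWord p (traceOf
      (((s, some γ1, c1) :: π1r) ++ (u, some (⟨p, q, hpq, m⟩ : Interaction P M), u') :: w1)) :=
    (send_mem_projWord_iff (hpq := hpq)).2 (mα_mem_trace_mid (hpq := hpq))
  have hout : Act.send p q m ∉ projWord p (traceOf ((s, some γ2, c2) :: π2r')) := by
    intro hc
    exact hA2t.not_mem_trace (q_mem_mα (hpq := hpq))
      ((send_mem_projWord_iff (hpq := hpq)).1 hc)
  have hprojne : projWord p (traceOf
      (((s, some γ1, c1) :: π1r) ++ (u, some (⟨p, q, hpq, m⟩ : Interaction P M), u') :: w1)) ≠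
      projWord p (traceOf ((s, some γ2, c2) :: π2r')) := by
    intro hE
    rw [hE] at hin
    exact hout hin
  rcases use_span hwf ht1 ht2 hp (Or.inl hpγ1) he1 rfl hspan hprojne with
    hfa | ⟨hnp1, -, -⟩ | ⟨-, hfw, -⟩
  · exact refute_FA_p1 (hpq := hpq) (List.cons_ne_nil _ _) hA1 hA2t hfa
  · exact hnp1 (p_mem_ptpRun_mid (hpq := hpq))
  · obtain ⟨p', hst, hne, haw⟩ := hfw ((s, some γ1, c1) :: π1r)
      (u, some (⟨p, q, hpq, m⟩ : Interaction P M), u') w1 rfl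
      (mem_ptpStep_iff.2 (p_mem_mα (hpq := hpq))) hA1.not_ptpRun
    rcases ptpStep_mα_cases (hpq := hpq) hst with rfl | rfl
    · exact hne rfl
    · exact hA2t.not_ptpRun haw.mem_right

/-- closing the case where only the second span component passes through `p→q:m`
and the first is `p`-free -/
lemma close_IIa (hwf : WellFormed A) {s c1 c2 v v' : Q} {γ1 γ2 : Interaction P M}
    {π1r' π2r w2 : List (Q × Option (Interaction P M) × Q)}
    (ht1 : A.Trans s (some γ1) c1) (ht2 : A.Trans s (some γ2) c2)
    (hq : q ∈ ptps A) (hqγ2 : q ∉ ptpI γ2)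
    (hA1t : Avoids p ((s, some γ1, c1) :: π1r'))
    (hA2 : Avoids q ((s, some γ2, c2) :: π2r))
    (hspan : Span A s ((s, some γ1, c1) :: π1r')
      (((s, some γ2, c2) :: π2r) ++ (v, some (⟨p, q, hpq, m⟩ : Interaction P M), v') :: w2)) :
    False := by
  have he2 : ((s, some γ2, c2) :: π2r) ++ (v, some (⟨p, q, hpq, m⟩ : Interaction P M), v') :: w2 =
      (s, some γ2, c2) :: (π2r ++ (v, some (⟨p, q, hpq, m⟩ : Interaction P M), v') :: w2) := by
    rw [List.cons_append]
  have hin : Act.recv p q m ∈ projWord q (traceOf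
      (((s, some γ2, c2) :: π2r) ++ (v, some (⟨p, q, hpq, m⟩ : Interaction P M), v') :: w2)) :=
    (recv_mem_projWord_iff (hpq := hpq)).2 (mα_mem_trace_mid (hpq := hpq))
  have hout : Act.recv p q m ∉ projWord q (traceOf ((s, some γ1, c1) :: π1r')) := by
    intro hc
    exact hA1t.not_mem_trace (p_mem_mα (hpq := hpq))
      ((recv_mem_projWord_iff (hpq := hpq)).1 hc)
  have hprojne : projWord q (traceOf ((s, some γ1, c1) :: π1r')) ≠
      projWord q (traceOf
        (((s, some γ2, c2) :: π2r) ++ (v, some (⟨p, q, hpq, m⟩ : Interaction P M), v') :: w2)) := by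
    intro hE
    rw [← hE] at hin
    exact hout hin
  rcases use_span hwf ht1 ht2 hq (Or.inr hqγ2) rfl he2 hspan hprojne with
    hfa | ⟨-, hfw, -⟩ | ⟨hnp2, -, -⟩
  · exact refute_FA_q3 (hpq := hpq) (List.cons_ne_nil _ _) hA1t hA2 hfa
  · obtain ⟨p', hst, hne, haw⟩ := hfw ((s, some γ2, c2) :: π2r)
      (v, some (⟨p, q, hpq, m⟩ : Interaction P M), v') w2 rfl
      (mem_ptpStep_iff.2 (q_mem_mα (hpq := hpq))) hA2.not_ptpRun
    rcases ptpStep_mα_cases (hpq := hpq) hst with rfl | rfl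
    · exact hA1t.not_ptpRun haw.mem_left
    · exact hne rfl
  · exact hnp2 (q_mem_ptpRun_mid (hpq := hpq))

end SpanUse


section CutRun

open List

variable {Q L : Type} {A : LTS Q L}

lemma stateList_get {s e : Q} {r : List (Q × Option L × Q)} (h : Steps A s r e)
    (i : ℕ) (hi : i < r.length + 1) :
    (s :: r.map (fun t => t.2.2))[i]'(by simpa using hi) = stAt s r i := by
  cases i with
  | zero => rfl
  | succ j =>
    have hj : j < r.length := by omega
    rw [List.getElem_cons_succ, List.getElem_map]
    exact (run_get h j hj).2

lemma cut_run {s e : Q} {r : List (Q × Option L × Q)} (h : Steps A s r e)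
    (hnd : ¬ (s :: r.map (fun t => t.2.2)).Nodup) :
    ∃ r', Steps A s r' e ∧ r'.length < r.length ∧ r' <+ r := by
  rw [List.nodup_iff_injective_get] at hnd
  obtain ⟨a, b, hab, hne⟩ := Function.not_injective_iff.1 hnd
  have hlen : (s :: r.map (fun t => t.2.2)).length = r.length + 1 := by simp
  have key : ∀ (i j : ℕ), i < j → (hi : i < r.length + 1) → (hj : j < r.length + 1) →
      stAt s r i = stAt s r j →
      ∃ r', Steps A s r' e ∧ r'.length < r.length ∧ r' <+ r := by
    intro i j hij hi hj heq
    refine ⟨r.take i ++ r.drop j, ?_, ?_, ?_⟩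
    · exact (steps_take h i).append_steps (heq ▸ steps_drop h j)
    · rw [List.length_append, List.length_take, List.length_drop]
      omega
    · have h1 : r.take i <+ r.take j := by
        have := List.take_prefix i (r.take j)
        rw [List.take_take, Nat.min_eq_left hij.le] at this
        exact this.sublist
      have h2 : r.take i ++ r.drop j <+ r.take j ++ r.drop j :=
        List.Sublist.append h1 (List.Sublist.refl _)
      rwa [List.take_append_drop] at h2
  have hga : (s :: r.map (fun t => t.2.2)).get a = stAt s r a.val := by
    rw [List.get_eq_getElem]
    exact stateList_get h a.val (by have := a.isLt; omega)
  have hgb : (s :: r.map (fun t => t.2.2)).get b = stAt s r b.val := by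
    rw [List.get_eq_getElem]
    exact stateList_get h b.val (by have := b.isLt; omega)
  have heq : stAt s r a.val = stAt s r b.val := by rw [← hga, ← hgb, hab]
  have hvne : a.val ≠ b.val := fun hc => hne (Fin.ext hc)
  have ha : a.val < r.length + 1 := by have := a.isLt; simpa using this
  have hb : b.val < r.length + 1 := by have := b.isLt; simpa using this
  rcases lt_or_gt_of_ne hvne with hlt | hlt
  · exact key a.val b.val hlt ha hb heq
  · exact key b.val a.val hlt hb ha heq.symm

lemma run_getLast {s e : Q} {r : List (Q × Option L × Q)} (h : Steps A s r e) (hne : r ≠ []) :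
    (r.getLast hne).2.2 = e := by
  have hl : 0 < r.length := List.length_pos_iff.2 hne
  rw [List.getLast_eq_getElem]
  have := (run_get h (r.length - 1) (by omega)).2
  rw [this]
  have hx : r.length - 1 + 1 = r.length := by omega
  rw [hx]
  exact stAt_length h

end CutRun


section Main

open List

instance finiteInteraction {P M : Type} [Finite P] [Finite M] : Finite (Interaction P M) :=
  Finite.of_injective (fun a => (a.sender, a.receiver, a.msg)) (by
    rintro ⟨s1, r1, n1, m1⟩ ⟨s2, r2, n2, m2⟩ h
    simp only [Prod.mk.injEq] at h
    exact Interaction.ext' h.1 h.2.1 h.2.2)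

variable {P M Q : Type} [DecidableEq P] [Finite P] [Finite M] [Finite Q]

lemma key_lemma (A : LTS Q (Interaction P M)) (hwf : WellFormed A)
    (p q : P) (hpq : p ≠ q) (hp : p ∈ ptps A) (hq : q ∈ ptps A) (m : M) :
    ∀ (n : ℕ) (s sp sp' sq sq' : Q) (π1 π2 : List (Q × Option (Interaction P M) × Q)),
      π1.length + π2.length ≤ n →
      Steps A s π1 sp → Avoids p π1 →
      A.Trans sp (some ⟨p, q, hpq, m⟩) sp' →
      Steps A s π2 sq → Avoids q π2 →
      A.Trans sq (some ⟨p, q, hpq, m⟩) sq' →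
      ∃ s', A.Trans s (some ⟨p, q, hpq, m⟩) s' := by
  intro n
  induction n with
  | zero =>
    intro s sp sp' sq sq' π1 π2 hlen h1 hA1 h2 h3 hA2 h4
    have hπ1 : π1 = [] := List.eq_nil_of_length_eq_zero (by omega)
    subst hπ1
    cases h1
    exact ⟨sp', h2⟩
  | succ n IH =>
    intro s sp sp' sq sq' π1 π2 hlen h1 hA1 h2 h3 hA2 h4
    classical
    rcases π1 with _ | ⟨⟨a1, b1, c1⟩, π1r⟩
    · cases h1
      exact ⟨sp', h2⟩
    rcases π2 with _ | ⟨⟨a2, b2, c2⟩, π2r⟩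
    · cases h3
      exact ⟨sq', h4⟩
    have ha1 : s = a1 := by cases h1; rfl
    subst ha1
    have ha2 : s = a2 := by cases h3; rfl
    subst ha2
    obtain ⟨γ1, hγ1, hpγ1⟩ := hA1 (s, b1, c1) (List.mem_cons_self)
    change b1 = some γ1 at hγ1
    subst hγ1
    obtain ⟨γ2, hγ2, hqγ2⟩ := hA2 (s, b2, c2) (List.mem_cons_self)
    change b2 = some γ2 at hγ2
    subst hγ2
    obtain ⟨ht1, hs1⟩ : A.Trans s (some γ1) c1 ∧ Steps A c1 π1r sp := by
      cases h1 with | cons a b => exact ⟨a, b⟩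
    obtain ⟨ht2, hs2⟩ : A.Trans s (some γ2) c2 ∧ Steps A c2 π2r sq := by
      cases h3 with | cons a b => exact ⟨a, b⟩
    simp only [List.length_cons] at hlen
    -- Step B : reduce to simple runs
    by_cases hnd1 : ¬ (s :: ((s, some γ1, c1) :: π1r).map (fun t => t.2.2)).Nodup
    · obtain ⟨r', hst, hlt, hsub⟩ := cut_run h1 hnd1
      refine IH s sp sp' sq sq' r' ((s, some γ2, c2) :: π2r) ?_ hst (hA1.sublist hsub)
        h2 h3 hA2 h4
      simp only [List.length_cons] at hlt ⊢
      omega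
    rw [not_not] at hnd1
    by_cases hnd2 : ¬ (s :: ((s, some γ2, c2) :: π2r).map (fun t => t.2.2)).Nodup
    · obtain ⟨r', hst, hlt, hsub⟩ := cut_run h3 hnd2
      refine IH s sp sp' sq sq' ((s, some γ1, c1) :: π1r) r' ?_ h1 hA1 h2 hst
        (hA2.sublist hsub) h4
      simp only [List.length_cons] at hlt ⊢
      omega
    rw [not_not] at hnd2
    -- Step C : shared-state reductions
    by_cases hsh : ∃ y, y ∈ visited s ((s, some γ1, c1) :: π1r) ∧
        y ∈ visited s ((s, some γ2, c2) :: π2r) ∧ y ≠ s ∧ ¬(y = sp ∧ y = sq)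
    · obtain ⟨y, hy1, hy2, hys, hysp⟩ := hsh
      obtain ⟨k1, hk1le, hk1⟩ := (mem_visited_iff h1).1 hy1
      obtain ⟨k2, hk2le, hk2⟩ := (mem_visited_iff h3).1 hy2
      have hk1pos : 1 ≤ k1 := by
        rcases Nat.eq_zero_or_pos k1 with rfl | h
        · rw [stAt_zero] at hk1
          exact absurd hk1.symm hys
        · exact h
      have hk2pos : 1 ≤ k2 := by
        rcases Nat.eq_zero_or_pos k2 with rfl | h
        · rw [stAt_zero] at hk2
          exact absurd hk2.symm hys
        · exact h
      simp only [List.length_cons] at hk1le hk2le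
      by_cases hysp' : y = sp
      · have hysq : y ≠ sq := fun hc => hysp ⟨hysp', hc⟩
        have hk2lt : k2 < π2r.length + 1 := by
          rcases lt_or_eq_of_le hk2le with h | h
          · exact h
          · exfalso
            apply hysq
            rw [← hk2, h]
            have h5 := stAt_length h3
            rw [List.length_cons] at h5
            exact h5
        rw [hysp'] at hk2
        refine IH s sp sp' sp sp' ((s, some γ1, c1) :: π1r)
          (((s, some γ2, c2) :: π2r).take k2) ?_ h1 hA1 h2 ?_
          (hA2.sublist (List.take_sublist _ _)) h2
        · have : (((s, some γ2, c2) :: π2r).take k2).length ≤ k2 := by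
            rw [List.length_take]
            omega
          simp only [List.length_cons] at this ⊢
          omega
        · have := steps_take h3 k2
          rwa [hk2] at this
      · have hk1lt : k1 < π1r.length + 1 := by
          rcases lt_or_eq_of_le hk1le with h | h
          · exact h
          · exfalso
            apply hysp'
            rw [← hk1, h]
            have h5 := stAt_length h1
            rw [List.length_cons] at h5
            exact h5
        have hlenA : (((s, some γ1, c1) :: π1r).drop k1).length +
            (((s, some γ2, c2) :: π2r).drop k2).length ≤ n := by
          rw [List.length_drop, List.length_drop]
          simp only [List.length_cons]
          omega
        obtain ⟨w, hw⟩ := IH y sp sp' sq sq' (((s, some γ1, c1) :: π1r).drop k1)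
          (((s, some γ2, c2) :: π2r).drop k2) hlenA
          (by have := steps_drop h1 k1; rwa [hk1] at this)
          (hA1.sublist (List.drop_sublist _ _)) h2
          (by have := steps_drop h3 k2; rwa [hk2] at this)
          (hA2.sublist (List.drop_sublist _ _)) h4
        have hlenB : (((s, some γ1, c1) :: π1r).take k1).length +
            ((s, some γ2, c2) :: π2r).length ≤ n := by
          have h6 := List.length_take_le k1 ((s, some γ1, c1) :: π1r)
          simp only [List.length_cons] at h6 ⊢
          omega
        exact IH s y w sq sq' (((s, some γ1, c1) :: π1r).take k1)
          ((s, some γ2, c2) :: π2r) hlenB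
          (by have := steps_take h1 k1; rwa [hk1] at this)
          (hA1.sublist (List.take_sublist _ _)) hw h3 hA2 h4
    push_neg at hsh
    -- Step D : last labels involve q (resp. p)
    have hne1 : ((s, some γ1, c1) :: π1r) ≠ [] := List.cons_ne_nil _ _
    have hne2 : ((s, some γ2, c2) :: π2r) ≠ [] := List.cons_ne_nil _ _
    obtain ⟨β1, hβ1eq, hpβ1⟩ := hA1 _ (List.getLast_mem hne1)
    have hlast1 : A.Trans ((((s, some γ1, c1) :: π1r)).getLast hne1).1 (some β1) sp := by
      have hm := mem_run_trans h1 (List.getLast_mem hne1)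
      rw [hβ1eq, run_getLast h1 hne1] at hm
      exact hm
    have hqβ1 : q ∈ ptpI β1 := by
      obtain ⟨z, hz1, hz2⟩ := ws_share hwf.1 hlast1 h2
      rcases mem_ptpI_iff.1 hz2 with h | h
      · rw [h] at hz1
        exact absurd hz1 hpβ1
      · rw [h] at hz1
        exact hz1
    have hβ1mem : β1 ∈ traceOf ((s, some γ1, c1) :: π1r) :=
      mem_traceOf_iff.2 ⟨_, List.getLast_mem hne1, hβ1eq⟩
    obtain ⟨β2, hβ2eq, hqβ2⟩ := hA2 _ (List.getLast_mem hne2)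
    have hlast2 : A.Trans ((((s, some γ2, c2) :: π2r)).getLast hne2).1 (some β2) sq := by
      have hm := mem_run_trans h3 (List.getLast_mem hne2)
      rw [hβ2eq, run_getLast h3 hne2] at hm
      exact hm
    have hpβ2 : p ∈ ptpI β2 := by
      obtain ⟨z, hz1, hz2⟩ := ws_share hwf.1 hlast2 h4
      rcases mem_ptpI_iff.1 hz2 with h | h
      · rw [h] at hz1
        exact hz1
      · rw [h] at hz1
        exact absurd hz1 hqβ2
    have hβ2mem : β2 ∈ traceOf ((s, some γ2, c2) :: π2r) :=
      mem_traceOf_iff.2 ⟨_, List.getLast_mem hne2, hβ2eq⟩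
    have hδ2 : ∃ b ∈ traceOf ((s, some γ2, c2) :: π2r), p ∈ ptpI b := ⟨β2, hβ2mem, hpβ2⟩
    have hqrun1 : q ∈ ptpRun ((s, some γ1, c1) :: π1r) :=
      ⟨_, List.getLast_mem hne1, β1, hβ1eq, hqβ1⟩
    -- pre-candidacy of the basic runs
    have hpre1 : PreCandidate A s ((s, some γ1, c1) :: π1r) :=
      preCandidate_of_nodup h1 ((List.nodup_cons.1 hnd1).2.of_map)
    have hpre2 : PreCandidate A s ((s, some γ2, c2) :: π2r) :=
      preCandidate_of_nodup h3 ((List.nodup_cons.1 hnd2).2.of_map)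
    by_cases hspsq : sp = sq
    · -- the two runs are cofinal : span (π1, π2) at e = sp
      subst hspsq
      have hcommon : ∀ y, y ∈ visited s ((s, some γ1, c1) :: π1r) →
          y ∈ visited s ((s, some γ2, c2) :: π2r) → y = s ∨ y = sp := by
        intro y hy1 hy2
        by_cases hys : y = s
        · exact Or.inl hys
        · exact Or.inr (hsh y hy1 hy2 hys).1
      have hspan : Span A s ((s, some γ1, c1) :: π1r) ((s, some γ2, c2) :: π2r) :=
        ⟨hpre1, hpre2, Or.inl ⟨sp, h1, h3, hcommon⟩⟩
      have hprojne : projWord q (traceOf ((s, some γ1, c1) :: π1r)) ≠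
          projWord q (traceOf ((s, some γ2, c2) :: π2r)) := by
        rw [hA2.projWord_nil]
        obtain ⟨a, ha⟩ := projLabel_isSome_of_mem hqβ1
        exact List.ne_nil_of_mem (mem_projWord_iff.2 ⟨β1, hβ1mem, ha⟩)
      exfalso
      rcases use_span hwf ht1 ht2 hq (Or.inr hqγ2) rfl rfl hspan hprojne with
        hfa | ⟨hnp1, -, -⟩ | ⟨-, -, htail⟩
      · exact hA2.not_ptpRun hfa.mem_right
      · exact hnp1 hqrun1
      · have hstep2 : Steps A s (((s, some γ2, c2) :: π2r) ++
            [(sp, some (⟨p, q, hpq, m⟩ : Interaction P M), sq')]) sq' :=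
          h3.append_steps (Steps.cons h4 (Steps.nil _))
        have hσpre : PreCandidate A s (((s, some γ2, c2) :: π2r) ++
            [(sp, some (⟨p, q, hpq, m⟩ : Interaction P M), sq')]) :=
          preCandidate_of_nodup hstep2 (nodup_append_last h3 hnd2 _ _)
        obtain ⟨z, hz⟩ := exists_candidate_extension hσpre
        have hcand : Candidate A s (((s, some γ2, c2) :: π2r) ++
            ((sp, some (⟨p, q, hpq, m⟩ : Interaction P M), sq') :: z)) := by
          have heq : ((s, some γ2, c2) :: π2r) ++
              [(sp, some (⟨p, q, hpq, m⟩ : Interaction P M), sq')] ++ z =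
              ((s, some γ2, c2) :: π2r) ++
              ((sp, some (⟨p, q, hpq, m⟩ : Interaction P M), sq') :: z) := by
            simp
          rwa [heq] at hz
        obtain ⟨p', hst, hpne, haw⟩ := htail _ hcand []
          (sp, some (⟨p, q, hpq, m⟩ : Interaction P M), sq') z rfl
          (mem_ptpStep_iff.2 (q_mem_mα (hpq := hpq))) not_ptpRun_nil
        rcases ptpStep_mα_cases (hpq := hpq) hst with rfl | rfl
        · exact hA1.not_ptpRun haw.mem_left
        · exact hpne rfl
    · -- sp ≠ sq : the two runs share only s
      exfalso
      have hshared : ∀ y, y ∈ visited s ((s, some γ1, c1) :: π1r) →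
          y ∈ visited s ((s, some γ2, c2) :: π2r) → y = s := by
        intro y hy1 hy2
        by_contra hys
        obtain ⟨hs1', hs2'⟩ := hsh y hy1 hy2 hys
        exact hspsq (hs1'.symm.trans hs2' ▸ rfl)
      -- candidate extensions through the interaction
      have hst1 : Steps A s (((s, some γ1, c1) :: π1r) ++
          [(sp, some (⟨p, q, hpq, m⟩ : Interaction P M), sp')]) sp' :=
        h1.append_steps (Steps.cons h2 (Steps.nil _))
      have hσ1 : PreCandidate A s (((s, some γ1, c1) :: π1r) ++
          [(sp, some (⟨p, q, hpq, m⟩ : Interaction P M), sp')]) :=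
        preCandidate_of_nodup hst1 (nodup_append_last h1 hnd1 _ _)
      obtain ⟨z1, hz1⟩ := exists_candidate_extension hσ1
      rw [List.append_assoc, List.singleton_append] at hz1
      have hst2 : Steps A s (((s, some γ2, c2) :: π2r) ++
          [(sq, some (⟨p, q, hpq, m⟩ : Interaction P M), sq')]) sq' :=
        h3.append_steps (Steps.cons h4 (Steps.nil _))
      have hσ2 : PreCandidate A s (((s, some γ2, c2) :: π2r) ++
          [(sq, some (⟨p, q, hpq, m⟩ : Interaction P M), sq')]) :=
        preCandidate_of_nodup hst2 (nodup_append_last h3 hnd2 _ _)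
      obtain ⟨z2, hz2⟩ := exists_candidate_extension hσ2
      rw [List.append_assoc, List.singleton_append] at hz2
      obtain ⟨E1, hE1⟩ := hz1.1.1
      obtain ⟨E2, hE2⟩ := hz2.1.1
      by_cases hshρ : ∀ y, y ∈ visited s (((s, some γ1, c1) :: π1r) ++
          (sp, some (⟨p, q, hpq, m⟩ : Interaction P M), sp') :: z1) →
          y ∈ visited s (((s, some γ2, c2) :: π2r) ++
          (sq, some (⟨p, q, hpq, m⟩ : Interaction P M), sq') :: z2) → y = s
      · -- Case A : both candidates share only s : span of kind 2
        have hspan : Span A s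
            (((s, some γ1, c1) :: π1r) ++ (sp, some (⟨p, q, hpq, m⟩ : Interaction P M), sp') :: z1)
            (((s, some γ2, c2) :: π2r) ++ (sq, some (⟨p, q, hpq, m⟩ : Interaction P M), sq') :: z2) :=
          ⟨hz1.1, hz2.1, Or.inr (Or.inl ⟨hz1, hz2, hshρ⟩)⟩
        exact close_IIb (hpq := hpq) hwf ht1 ht2 hp hpγ1 hA1 hA2 hδ2 hspan
      · push_neg at hshρ
        obtain ⟨y0, hy01, hy02, hy0s⟩ := hshρ
        -- first meeting point along ρ2
        have hPex : ∃ j, 1 ≤ j ∧ j ≤ (((s, some γ2, c2) :: π2r) ++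
            (sq, some (⟨p, q, hpq, m⟩ : Interaction P M), sq') :: z2).length ∧
            stAt s (((s, some γ2, c2) :: π2r) ++
              (sq, some (⟨p, q, hpq, m⟩ : Interaction P M), sq') :: z2) j ∈
              visited s (((s, some γ1, c1) :: π1r) ++
                (sp, some (⟨p, q, hpq, m⟩ : Interaction P M), sp') :: z1) ∧
            stAt s (((s, some γ2, c2) :: π2r) ++
              (sq, some (⟨p, q, hpq, m⟩ : Interaction P M), sq') :: z2) j ≠ s := by
          obtain ⟨k, hkle, hkst⟩ := (mem_visited_iff hE2).1 hy02
          have hkpos : 1 ≤ k := by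
            rcases Nat.eq_zero_or_pos k with rfl | h
            · rw [stAt_zero] at hkst
              exact absurd hkst.symm hy0s
            · exact h
          exact ⟨k, hkpos, hkle, by rw [hkst]; exact hy01, by rw [hkst]; exact hy0s⟩
        have hPj := Nat.find_spec hPex
        obtain ⟨hj1, hjle, hjvis, hjns⟩ := hPj
        have hQex : ∃ i, 1 ≤ i ∧ i ≤ (((s, some γ1, c1) :: π1r) ++
            (sp, some (⟨p, q, hpq, m⟩ : Interaction P M), sp') :: z1).length ∧
            stAt s (((s, some γ1, c1) :: π1r) ++
              (sp, some (⟨p, q, hpq, m⟩ : Interaction P M), sp') :: z1) i =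
            stAt s (((s, some γ2, c2) :: π2r) ++
              (sq, some (⟨p, q, hpq, m⟩ : Interaction P M), sq') :: z2) (Nat.find hPex) := by
          obtain ⟨k, hkle, hkst⟩ := (mem_visited_iff hE1).1 hjvis
          have hkpos : 1 ≤ k := by
            rcases Nat.eq_zero_or_pos k with rfl | h
            · rw [stAt_zero] at hkst
              exact absurd hkst.symm hjns
            · exact h
          exact ⟨k, hkpos, hkle, hkst⟩
        obtain ⟨hi1, hile, hist⟩ := Nat.find_spec hQex
        -- the span (τ1, τ2)
        have hτ1pre : PreCandidate A s ((((s, some γ1, c1) :: π1r) ++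
            (sp, some (⟨p, q, hpq, m⟩ : Interaction P M), sp') :: z1).take (Nat.find hQex)) :=
          preCandidate_prefix hz1.1 (List.take_prefix _ _)
        have hτ2pre : PreCandidate A s ((((s, some γ2, c2) :: π2r) ++
            (sq, some (⟨p, q, hpq, m⟩ : Interaction P M), sq') :: z2).take (Nat.find hPex)) :=
          preCandidate_prefix hz2.1 (List.take_prefix _ _)
        have hτ1steps : Steps A s ((((s, some γ1, c1) :: π1r) ++
            (sp, some (⟨p, q, hpq, m⟩ : Interaction P M), sp') :: z1).take (Nat.find hQex))
            (stAt s (((s, some γ2, c2) :: π2r) ++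
              (sq, some (⟨p, q, hpq, m⟩ : Interaction P M), sq') :: z2) (Nat.find hPex)) := by
          have := steps_take hE1 (Nat.find hQex)
          rwa [hist] at this
        have hτ2steps : Steps A s ((((s, some γ2, c2) :: π2r) ++
            (sq, some (⟨p, q, hpq, m⟩ : Interaction P M), sq') :: z2).take (Nat.find hPex))
            (stAt s (((s, some γ2, c2) :: π2r) ++
              (sq, some (⟨p, q, hpq, m⟩ : Interaction P M), sq') :: z2) (Nat.find hPex)) :=
          steps_take hE2 (Nat.find hPex)
        have hτ2len : ((((s, some γ2, c2) :: π2r) ++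
            (sq, some (⟨p, q, hpq, m⟩ : Interaction P M), sq') :: z2).take
              (Nat.find hPex)).length = Nat.find hPex := by
          rw [List.length_take]
          omega
        have hcommon : ∀ y, y ∈ visited s ((((s, some γ1, c1) :: π1r) ++
            (sp, some (⟨p, q, hpq, m⟩ : Interaction P M), sp') :: z1).take (Nat.find hQex)) →
            y ∈ visited s ((((s, some γ2, c2) :: π2r) ++
              (sq, some (⟨p, q, hpq, m⟩ : Interaction P M), sq') :: z2).take (Nat.find hPex)) →
            y = s ∨ y = stAt s (((s, some γ2, c2) :: π2r) ++
              (sq, some (⟨p, q, hpq, m⟩ : Interaction P M), sq') :: z2) (Nat.find hPex) := by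
          intro y hy1 hy2
          obtain ⟨j, hjle', hjst⟩ := (mem_visited_iff hτ2steps).1 hy2
          rw [hτ2len] at hjle'
          have hjst' : stAt s (((s, some γ2, c2) :: π2r) ++
              (sq, some (⟨p, q, hpq, m⟩ : Interaction P M), sq') :: z2) j = y := by
            rw [← hjst]
            exact (stAt_prefix (List.take_prefix _ _) (by rw [hτ2len]; exact hjle')).symm
          rcases Nat.eq_zero_or_pos j with rfl | hjpos
          · left
            rw [← hjst', stAt_zero]
          rcases eq_or_lt_of_le hjle' with rfl | hjlt
          · right
            rw [← hjst']
          · by_cases hys : y = s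
            · exact Or.inl hys
            exfalso
            refine Nat.find_min hPex hjlt ⟨hjpos, by omega, ?_, ?_⟩
            · rw [hjst']
              exact visited_prefix_subset (List.take_prefix _ _) hy1
            · rw [hjst']
              exact hys
        have hspan : Span A s
            ((((s, some γ1, c1) :: π1r) ++
              (sp, some (⟨p, q, hpq, m⟩ : Interaction P M), sp') :: z1).take (Nat.find hQex))
            ((((s, some γ2, c2) :: π2r) ++
              (sq, some (⟨p, q, hpq, m⟩ : Interaction P M), sq') :: z2).take (Nat.find hPex)) :=
          ⟨hτ1pre, hτ2pre, Or.inl ⟨_, hτ1steps, hτ2steps, hcommon⟩⟩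
        rcases le_or_gt (Nat.find hPex) (((s, some γ2, c2) :: π2r)).length with hj'le | hj'gt
        · -- Case (I) : τ2 stays inside π2
          obtain ⟨j0, hj0⟩ : ∃ j0, Nat.find hPex = j0 + 1 := ⟨Nat.find hPex - 1, by omega⟩
          have hτ2eq : (((s, some γ2, c2) :: π2r) ++
              (sq, some (⟨p, q, hpq, m⟩ : Interaction P M), sq') :: z2).take (Nat.find hPex) =
              (s, some γ2, c2) :: (π2r.take j0) := by
            rw [take_append_cons_of_le hj'le, hj0, List.take_succ_cons]
          have hA2τ : Avoids q ((s, some γ2, c2) :: (π2r.take j0)) := by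
            have := hA2.of_prefix (List.take_prefix (Nat.find hPex) ((s, some γ2, c2) :: π2r))
            rwa [hj0, List.take_succ_cons] at this
          have hi'gt : ((s, some γ1, c1) :: π1r).length < Nat.find hQex := by
            by_contra hle
            push_neg at hle
            have hx1 : stAt s (((s, some γ1, c1) :: π1r) ++
                (sp, some (⟨p, q, hpq, m⟩ : Interaction P M), sp') :: z1) (Nat.find hQex) =
                stAt s ((s, some γ1, c1) :: π1r) (Nat.find hQex) :=
              (stAt_prefix ⟨(sp, some (⟨p, q, hpq, m⟩ : Interaction P M), sp') :: z1, rfl⟩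
                hle).symm
            have he1 : stAt s (((s, some γ2, c2) :: π2r) ++
                (sq, some (⟨p, q, hpq, m⟩ : Interaction P M), sq') :: z2) (Nat.find hPex) ∈
                visited s ((s, some γ1, c1) :: π1r) := by
              rw [← hist, hx1]
              exact stAt_mem_visited h1 hle
            have hx2 : stAt s (((s, some γ2, c2) :: π2r) ++
                (sq, some (⟨p, q, hpq, m⟩ : Interaction P M), sq') :: z2) (Nat.find hPex) =
                stAt s ((s, some γ2, c2) :: π2r) (Nat.find hPex) :=
              (stAt_prefix ⟨(sq, some (⟨p, q, hpq, m⟩ : Interaction P M), sq') :: z2, rfl⟩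
                hj'le).symm
            have he2 : stAt s (((s, some γ2, c2) :: π2r) ++
                (sq, some (⟨p, q, hpq, m⟩ : Interaction P M), sq') :: z2) (Nat.find hPex) ∈
                visited s ((s, some γ2, c2) :: π2r) := by
              rw [hx2]
              exact stAt_mem_visited h3 hj'le
            exact hjns (hshared _ he1 he2)
          have hτ1eq : (((s, some γ1, c1) :: π1r) ++
              (sp, some (⟨p, q, hpq, m⟩ : Interaction P M), sp') :: z1).take (Nat.find hQex) =
              ((s, some γ1, c1) :: π1r) ++
                (sp, some (⟨p, q, hpq, m⟩ : Interaction P M), sp') ::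
                  (z1.take (Nat.find hQex - ((s, some γ1, c1) :: π1r).length - 1)) :=
            take_append_cons_of_gt hi'gt
          rw [hτ1eq, hτ2eq] at hspan
          exact close_I (hpq := hpq) hwf ht1 ht2 hp hpγ1 hA1 hA2τ hspan
        · -- Case (II) : τ2 passes through the interaction
          have hτ2eq : (((s, some γ2, c2) :: π2r) ++
              (sq, some (⟨p, q, hpq, m⟩ : Interaction P M), sq') :: z2).take (Nat.find hPex) =
              ((s, some γ2, c2) :: π2r) ++
                (sq, some (⟨p, q, hpq, m⟩ : Interaction P M), sq') ::
                  (z2.take (Nat.find hPex - ((s, some γ2, c2) :: π2r).length - 1)) :=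
            take_append_cons_of_gt hj'gt
          rcases le_or_gt (Nat.find hQex) (((s, some γ1, c1) :: π1r)).length with hi'le | hi'gt
          · -- Case (IIa) : τ1 stays inside π1
            obtain ⟨i0, hi0⟩ : ∃ i0, Nat.find hQex = i0 + 1 := ⟨Nat.find hQex - 1, by omega⟩
            have hτ1eq : (((s, some γ1, c1) :: π1r) ++
                (sp, some (⟨p, q, hpq, m⟩ : Interaction P M), sp') :: z1).take (Nat.find hQex) =
                (s, some γ1, c1) :: (π1r.take i0) := by
              rw [take_append_cons_of_le hi'le, hi0, List.take_succ_cons]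
            have hA1τ : Avoids p ((s, some γ1, c1) :: (π1r.take i0)) := by
              have := hA1.of_prefix (List.take_prefix (Nat.find hQex) ((s, some γ1, c1) :: π1r))
              rwa [hi0, List.take_succ_cons] at this
            rw [hτ1eq, hτ2eq] at hspan
            exact close_IIa (hpq := hpq) hwf ht1 ht2 hq hqγ2 hA1τ hA2 hspan
          · -- Case (IIb) : both pass through the interaction
            have hτ1eq : (((s, some γ1, c1) :: π1r) ++
                (sp, some (⟨p, q, hpq, m⟩ : Interaction P M), sp') :: z1).take (Nat.find hQex) =
                ((s, some γ1, c1) :: π1r) ++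
                  (sp, some (⟨p, q, hpq, m⟩ : Interaction P M), sp') ::
                    (z1.take (Nat.find hQex - ((s, some γ1, c1) :: π1r).length - 1)) :=
              take_append_cons_of_gt hi'gt
            rw [hτ1eq, hτ2eq] at hspan
            exact close_IIb (hpq := hpq) hwf ht1 ht2 hp hpγ1 hA1 hA2 hδ2 hspan

end Main


/-- Lemma 3.7: if, from a state `s` of a well-formed c-automaton `A`,
the intermediate CFSM `A_p` can reach (via ε-steps) a send `pq!m` and the intermediate
CFSM `A_q` can reach (via ε-steps) the matching receive `pq?m`, then `s` has an outgoing
transition labelled `p→q:m` in `A`. -/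
theorem intermediate_send_recv_interaction
    {P M Q : Type} [DecidableEq P] [Finite P] [Finite M] [Finite Q]
    (A : LTS Q (Interaction P M)) (hwf : WellFormed A)
    (p q : P) (hpq : p ≠ q) (hp : p ∈ ptps A) (hq : q ∈ ptps A) (m : M)
    (s sp sp' sq sq' : Q)
    (h1 : Relation.ReflTransGen (EpsStep (intermediate A p)) s sp)
    (h2 : (intermediate A p).Trans sp (some (Act.send p q m)) sp')
    (h3 : Relation.ReflTransGen (EpsStep (intermediate A q)) s sq)
    (h4 : (intermediate A q).Trans sq (some (Act.recv p q m)) sq') :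
    ∃ s', A.Trans s (some ⟨p, q, hpq, m⟩) s' := by
  classical
  have hdet := hwf.2.1.1
  -- turn ε-chains into runs of A avoiding the participant
  have heps : ∀ (x : P) {a b : Q},
      Relation.ReflTransGen (EpsStep (intermediate A x)) a b →
      ∃ π, Steps A a π b ∧ Avoids x π := by
    intro x a b h
    induction h with
    | refl => exact ⟨[], Steps.nil _, fun t ht => absurd ht List.not_mem_nil⟩
    | tail hab hbc ih =>
      obtain ⟨π, hst, hav⟩ := ih
      obtain ⟨αo, hA, hnone⟩ := hbc
      cases αo with
      | none => exact absurd hA (hdet _ _)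
      | some β =>
        have hβ : x ∉ ptpI β := by
          apply projLabel_eq_none_iff.1
          exact hnone.symm
        refine ⟨π ++ [(_, some β, _)], hst.append_steps (Steps.cons hA (Steps.nil _)), ?_⟩
        intro t ht
        rcases List.mem_append.1 ht with ht' | ht'
        · exact hav t ht'
        · rw [List.mem_singleton] at ht'
          subst ht'
          exact ⟨β, rfl, hβ⟩
  obtain ⟨π1, hst1, hav1⟩ := heps p h1
  obtain ⟨π2, hst2, hav2⟩ := heps q h3
  -- decode the send and receive transitions
  have h2' : A.Trans sp (some (⟨p, q, hpq, m⟩ : Interaction P M)) sp' := by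
    obtain ⟨αo, hA, heq⟩ := h2
    cases αo with
    | none => cases heq
    | some β =>
      have hβ : β = (⟨p, q, hpq, m⟩ : Interaction P M) :=
        (projLabel_send_iff (hpq := hpq)).1 heq.symm
      rwa [hβ] at hA
  have h4' : A.Trans sq (some (⟨p, q, hpq, m⟩ : Interaction P M)) sq' := by
    obtain ⟨αo, hA, heq⟩ := h4
    cases αo with
    | none => cases heq
    | some β =>
      have hβ : β = (⟨p, q, hpq, m⟩ : Interaction P M) :=
        (projLabel_recv_iff (hpq := hpq)).1 heq.symm
      rwa [hβ] at hA
  exact key_lemma A hwf p q hpq hp hq m (π1.length + π2.length) s sp sp' sq sq' π1 π2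
    le_rfl hst1 hav1 h2' hst2 hav2 h4'

end CAut
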